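/- arXiv:1301.2525 — 5 statements merged into one kernel-verified Lean document; each statement's English description precedes it below -/
import Mathlib

section
/- Let d ≥ 1. There exists a constant C > 0, depending only on d, such that for every N ≥ 1, every f ∈ L_N(ℝ^d), every i ∈ {1,…,d}, and every x ∈ ℝ^d, the principal value R_i f(x) = lim_{ε'→0⁺} ∫_{{y : |x−y| > ε'}} f(y)·(x_i − y_i)/|x−y|^{d+1} dy satisfies |R_i f(x)| ≤ C·( sup_{t∈ℝ^d} |∇f(t)| + ‖f‖_{L¹(ℝ^d)} ), where |∇f(t)| is the Euclidean norm of the gradient of f at t. -/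
open MeasureTheory Filter Topology Real

noncomputable section

abbrev Ed (d : ℕ) := EuclideanSpace ℝ (Fin d)




lemma abs_coord_le_norm {d : ℕ} (z : Ed d) (i : Fin d) : |z i| ≤ ‖z‖ := by
  rw [EuclideanSpace.norm_eq, ← Real.sqrt_sq_eq_abs]
  apply Real.sqrt_le_sqrt
  have := Finset.single_le_sum (f := fun j => ‖z j‖ ^ 2) (fun j _ => sq_nonneg _)
    (Finset.mem_univ i)
  simpa [Real.norm_eq_abs, sq_abs] using this

lemma eucl_sum_single {d : ℕ} (v : Ed d) :
    v = ∑ j, v j • EuclideanSpace.single j (1:ℝ) := by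
  ext k
  rw [show (∑ j, v j • EuclideanSpace.single j (1:ℝ)) k
      = ∑ j, (v j • EuclideanSpace.single j (1:ℝ)) k from
      by rw [WithLp.ofLp_sum, Finset.sum_apply]]
  simp [EuclideanSpace.single_apply, Finset.sum_ite_eq]

lemma opnorm_le_sum {d : ℕ} (T : Ed d →L[ℝ] ℝ) :
    ‖T‖ ≤ ∑ j, |T (EuclideanSpace.single j 1)| := by
  apply ContinuousLinearMap.opNorm_le_bound _ (Finset.sum_nonneg fun _ _ => abs_nonneg _)
  intro v
  have hv : T v = ∑ j, v j * T (EuclideanSpace.single j 1) := by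
    conv_lhs => rw [eucl_sum_single v]
    rw [map_sum]
    simp [smul_eq_mul]
  rw [hv, Real.norm_eq_abs]
  calc |∑ j, v j * T (EuclideanSpace.single j 1)|
      ≤ ∑ j, |v j * T (EuclideanSpace.single j 1)| := Finset.abs_sum_le_sum_abs _ _
    _ ≤ ∑ j, ‖v‖ * |T (EuclideanSpace.single j 1)| := by
        apply Finset.sum_le_sum
        intro j _
        rw [abs_mul]
        exact mul_le_mul_of_nonneg_right (abs_coord_le_norm v j) (abs_nonneg _)
    _ = (∑ j, |T (EuclideanSpace.single j 1)|) * ‖v‖ := by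
        rw [Finset.sum_mul]; exact Finset.sum_congr rfl fun j _ => mul_comm _ _

lemma kernel_bound {d : ℕ} (i : Fin d) (z : Ed d) (hz : 0 < ‖z‖) :
    |z i / ‖z‖ ^ (d + 1)| ≤ (‖z‖ ^ d)⁻¹ := by
  rw [abs_div, abs_of_pos (pow_pos hz _)]
  rw [div_le_iff₀ (pow_pos hz _), pow_succ]
  calc |z i| ≤ ‖z‖ := abs_coord_le_norm z i
    _ = (‖z‖ ^ d)⁻¹ * (‖z‖ ^ d * ‖z‖) := by
        field_simp

lemma annulus_cancel {d : ℕ} (i : Fin d) (a : ℝ) :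
    ∫ z : Ed d, ({z : Ed d | a < ‖z‖ ∧ ‖z‖ ≤ 1}.indicator
      (fun z => z i / ‖z‖ ^ (d + 1))) z = 0 := by
  set G := ({z : Ed d | a < ‖z‖ ∧ ‖z‖ ≤ 1}.indicator (fun z => z i / ‖z‖ ^ (d + 1)))
  have hGneg : ∀ z, G (-z) = - G z := by
    intro z
    by_cases h : z ∈ {z : Ed d | a < ‖z‖ ∧ ‖z‖ ≤ 1}
    · have h' : -z ∈ {z : Ed d | a < ‖z‖ ∧ ‖z‖ ≤ 1} := by simpa [norm_neg] using h
      simp only [G, Set.indicator_of_mem h, Set.indicator_of_mem h']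
      rw [show (-z : Ed d) i = -(z i) from PiLp.neg_apply _ _ _, norm_neg, neg_div]
    · have h' : -z ∉ {z : Ed d | a < ‖z‖ ∧ ‖z‖ ≤ 1} := by simpa [norm_neg] using h
      simp [G, Set.indicator_of_notMem h, Set.indicator_of_notMem h']
  have h1 : ∫ z : Ed d, G (-z) = ∫ z : Ed d, G z := integral_neg_eq_self G volume
  have h2 : ∫ z : Ed d, G (-z) = - ∫ z : Ed d, G z := by
    simp_rw [hGneg]
    exact integral_neg _
  linarith [h1, h2]

lemma norm_rpow_annulus_integral {d : ℕ} (hd : 1 ≤ d) {a : ℝ} (ha : 0 < a) (ha1 : a < 1) :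
    ∫ z : Ed d, (Set.indicator (Set.Ioc a 1) (fun r => r ^ ((1:ℝ) - d))) ‖z‖
      ≤ d * (volume (Metric.ball (0 : Ed d) 1)).toReal := by
  have hd0 : 0 < d := hd
  haveI : Nontrivial (Ed d) := by
    refine ⟨EuclideanSpace.single ⟨0, hd0⟩ (1:ℝ), 0, fun h => ?_⟩
    have := congrArg norm h
    rw [EuclideanSpace.norm_single, norm_zero, norm_one] at this
    exact one_ne_zero this
  rw [integral_fun_norm_addHaar (volume : Measure (Ed d))
    (fun r => (Set.indicator (Set.Ioc a 1) (fun r => r ^ ((1:ℝ) - d))) r)]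
  rw [finrank_euclideanSpace_fin]
  have hpt : ∀ y : ℝ, y ^ (d - 1) • (Set.indicator (Set.Ioc a 1)
      (fun r => r ^ ((1:ℝ) - d))) y
      = (Set.indicator (Set.Ioc a 1) (fun r : ℝ => r ^ (d - 1) * r ^ ((1:ℝ) - d))) y := by
    intro y
    by_cases h : y ∈ Set.Ioc a 1 <;>
      simp [Set.indicator_of_mem, Set.indicator_of_notMem, h, smul_eq_mul]
  have hIoc : Set.Ioi (0:ℝ) ∩ Set.Ioc a 1 = Set.Ioc a 1 := by
    apply Set.inter_eq_self_of_subset_right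
    intro y hy
    exact lt_trans ha hy.1
  have hone : ∀ y ∈ Set.Ioc a 1, (y:ℝ) ^ (d - 1) * y ^ ((1:ℝ) - d) = 1 := by
    intro y hy
    have hy0 : (0:ℝ) < y := lt_trans ha hy.1
    have hcast : (y:ℝ) ^ (d - 1 : ℕ) = y ^ ((d:ℝ) - 1) := by
      rw [← Real.rpow_natCast y (d-1), Nat.cast_sub hd, Nat.cast_one]
    rw [hcast, ← Real.rpow_add hy0]
    norm_num
  have hval : ∫ y in Set.Ioi (0:ℝ), y ^ (d - 1) • (Set.indicator (Set.Ioc a 1)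
      (fun r => r ^ ((1:ℝ) - d))) y = 1 - a := by
    rw [show (fun y : ℝ => y ^ (d - 1) • (Set.indicator (Set.Ioc a 1)
        (fun r => r ^ ((1:ℝ) - d))) y)
      = fun y : ℝ => (Set.indicator (Set.Ioc a 1)
        (fun r : ℝ => r ^ (d - 1) * r ^ ((1:ℝ) - d))) y from funext hpt]
    rw [setIntegral_indicator measurableSet_Ioc, hIoc]
    rw [setIntegral_congr_fun measurableSet_Ioc (fun y hy => hone y hy)]
    simp [Real.volume_Ioc, ENNReal.toReal_ofReal (by linarith : (0:ℝ) ≤ 1 - a), ha1.le]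
  rw [hval, nsmul_eq_mul, smul_eq_mul]
  have hv0 : (0:ℝ) ≤ (volume (Metric.ball (0 : Ed d) 1)).toReal := ENNReal.toReal_nonneg
  have hdc : (0:ℝ) ≤ (d:ℝ) := Nat.cast_nonneg d
  rw [measureReal_def]
  nlinarith [mul_nonneg hdc hv0, mul_nonneg (mul_nonneg hdc hv0) ha.le]


/-- Truncated Riesz integral: `∫_{‖x-y‖>ε} f(y) (x_i - y_i)/‖x-y‖^(d+1) dy`. -/
noncomputable def truncRiesz (d : ℕ) (i : Fin d) (f : Ed d → ℝ) (x : Ed d) (ε : ℝ) : ℝ :=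
  ∫ y in {y : Ed d | ε < ‖x - y‖}, f y * ((x i - y i) / ‖x - y‖ ^ (d + 1))

/-- The principal value Riesz transform of `f` at `x` exists and equals `L`. -/
def RieszPV (d : ℕ) (i : Fin d) (f : Ed d → ℝ) (x : Ed d) (L : ℝ) : Prop :=
  Tendsto (truncRiesz d i f x) (𝓝[>] (0:ℝ)) (𝓝 L)

/-- The class `L_N(ℝ^d)` with constants `C` and `ε`. -/
structure IsLN (d N : ℕ) (f : Ed d → ℝ) (C ε : ℝ) : Prop where
  smooth : ContDiff ℝ 1 f
  Cpos : 0 < C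
  eps_nonneg : 0 ≤ ε
  eps_lt_one : ε < 1
  decay : ∀ x : Ed d, |f x| ≤ C * (1 + ‖x‖) ^ (-(d:ℝ) - N + ε)
  deriv_decay : ∀ (x : Ed d) (j : Fin d),
      |fderiv ℝ f x (EuclideanSpace.single j 1)| ≤ C * (1 + ‖x‖) ^ (-(d:ℝ) - N - 1 + ε)
  moments : ∀ β : Fin d → ℕ, (∑ j, β j) < N →
      ∫ x : Ed d, (∏ j, (x j) ^ (β j)) * f x = 0

/-- There is a constant depending only on `d` bounding the Riesz transform by the sup of the
gradient norm plus the `L¹` norm. -/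
theorem riesz_pv_bound (d : ℕ) (hd : 1 ≤ d) :
    ∃ C₀ : ℝ, 0 < C₀ ∧ ∀ (N : ℕ), 1 ≤ N → ∀ (f : Ed d → ℝ) (C ε : ℝ), IsLN d N f C ε →
      ∀ (i : Fin d) (x : Ed d) (L : ℝ), RieszPV d i f x L →
        |L| ≤ C₀ * ((⨆ t : Ed d, ‖fderiv ℝ f t‖) + ∫ y : Ed d, |f y|) := by
  have hd0 : 0 < d := hd
  set c : ℝ := (d : ℝ) * (volume (Metric.ball (0:Ed d) 1)).toReal with hc
  have hc0 : 0 ≤ c := mul_nonneg (Nat.cast_nonneg d) ENNReal.toReal_nonneg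
  refine ⟨c + 1, by linarith, ?_⟩
  intro N hN f C ε hLN i x L hPV
  set M : ℝ := ⨆ t : Ed d, ‖fderiv ℝ f t‖ with hMdef
  set I : ℝ := ∫ y : Ed d, |f y| with hIdef
  have hf_cont : Continuous f := hLN.smooth.continuous
  have hf_diff : ∀ t : Ed d, DifferentiableAt ℝ f t := fun t =>
    (hLN.smooth.differentiable one_ne_zero).differentiableAt
  -- boundedness of the derivative
  have hbdd : BddAbove (Set.range fun t : Ed d => ‖fderiv ℝ f t‖) := by
    refine ⟨(d:ℝ) * C, ?_⟩
    rintro _ ⟨t, rfl⟩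
    calc ‖fderiv ℝ f t‖ ≤ ∑ j, |(fderiv ℝ f t) (EuclideanSpace.single j 1)| := opnorm_le_sum _
      _ ≤ ∑ _j : Fin d, C := by
          apply Finset.sum_le_sum
          intro j _
          refine (hLN.deriv_decay t j).trans ?_
          have h1 : (1 + ‖t‖) ^ (-(d:ℝ) - N - 1 + ε) ≤ 1 := by
            apply Real.rpow_le_one_of_one_le_of_nonpos (by linarith [norm_nonneg t])
            have h2 : (1:ℝ) ≤ N := by exact_mod_cast hN
            have h3 : (0:ℝ) ≤ d := Nat.cast_nonneg d
            linarith [hLN.eps_lt_one]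
          nlinarith [hLN.Cpos]
      _ = d * C := by simp [mul_comm]
  have hMle : ∀ t : Ed d, ‖fderiv ℝ f t‖ ≤ M := fun t => le_ciSup hbdd t
  have hM0 : 0 ≤ M := Real.iSup_nonneg fun t => norm_nonneg _
  -- integrability of f
  have hf_int : Integrable f (volume : Measure (Ed d)) := by
    have hr : (Module.finrank ℝ (Ed d) : ℝ) < (d:ℝ) + N - ε := by
      rw [finrank_euclideanSpace_fin]
      have h2 : (1:ℝ) ≤ N := by exact_mod_cast hN
      linarith [hLN.eps_lt_one]
    refine ((integrable_one_add_norm hr).const_mul C).mono'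
      hf_cont.aestronglyMeasurable ?_
    filter_upwards with y
    rw [Real.norm_eq_abs]
    have := hLN.decay y
    rwa [show -(d:ℝ) - N + ε = -((d:ℝ) + N - ε) by ring] at this
  have habs : Integrable (fun y : Ed d => |f y|) volume := hf_int.abs
  have hI0 : 0 ≤ I := integral_nonneg fun y => abs_nonneg _
  -- main uniform bound
  have key : ∀ r : ℝ, r ∈ Set.Ioo (0:ℝ) 1 → |truncRiesz d i f x r| ≤ c * M + I := by
    rintro r ⟨hr0, hr1⟩
    set K : Ed d → ℝ := fun z => z i / ‖z‖ ^ (d + 1) with hK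
    set S : Set (Ed d) := {y : Ed d | r < ‖x - y‖} with hS
    set A : Set (Ed d) := {y : Ed d | r < ‖x - y‖ ∧ ‖x - y‖ ≤ 1} with hA
    set B : Set (Ed d) := {y : Ed d | 1 < ‖x - y‖} with hB
    have hcont : Continuous fun y : Ed d => ‖x - y‖ :=
      (continuous_const.sub continuous_id).norm
    have hSm : MeasurableSet S := hcont.measurable measurableSet_Ioi
    have hAm : MeasurableSet A := hcont.measurable measurableSet_Ioc
    have hBm : MeasurableSet B := hcont.measurable measurableSet_Ioi
    have hnum : Continuous fun y : Ed d => (x - y) i :=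
      (EuclideanSpace.proj (𝕜 := ℝ) i).continuous.comp (continuous_const.sub continuous_id)
    have hKmeas : Measurable fun y : Ed d => K (x - y) :=
      hnum.measurable.div ((hcont.pow _).measurable)
    have hKb : ∀ y : Ed d, r < ‖x - y‖ → |K (x - y)| ≤ (r ^ d)⁻¹ := by
      intro y hy
      refine (kernel_bound i _ (lt_trans hr0 hy)).trans ?_
      exact inv_anti₀ (pow_pos hr0 d) (pow_le_pow_left₀ hr0.le hy.le d)
    have hFint : IntegrableOn (fun y : Ed d => f y * K (x - y)) S volume := by
      refine Integrable.mono' ((habs.const_mul ((r ^ d)⁻¹)).restrict (s := S))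
        (hf_cont.aestronglyMeasurable.mul hKmeas.aestronglyMeasurable).restrict ?_
      rw [ae_restrict_iff' hSm]
      filter_upwards with y hy
      rw [Real.norm_eq_abs, abs_mul, mul_comm ((r ^ d)⁻¹) _]
      exact mul_le_mul_of_nonneg_left (hKb y hy) (abs_nonneg _)
    have hAS : A ⊆ S := fun y hy => hy.1
    have hBS : B ⊆ S := fun y hy => lt_trans hr1 hy
    have hFA : IntegrableOn (fun y : Ed d => f y * K (x - y)) A volume := hFint.mono_set hAS
    have hFB : IntegrableOn (fun y : Ed d => f y * K (x - y)) B volume := hFint.mono_set hBS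
    have hSAB : S = A ∪ B := by
      ext y
      simp only [hS, hA, hB, Set.mem_setOf_eq, Set.mem_union]
      constructor
      · intro h
        by_cases h1 : ‖x - y‖ ≤ 1
        · exact Or.inl ⟨h, h1⟩
        · exact Or.inr (lt_of_not_ge h1)
      · rintro (⟨h, _⟩ | h)
        · exact h
        · exact lt_trans hr1 h
    have hdisj : Disjoint A B := by
      rw [Set.disjoint_left]
      rintro y ⟨_, h2⟩ h3
      exact absurd h3 (not_lt.2 h2)
    have hsplit : truncRiesz d i f x r
        = (∫ y in A, f y * K (x - y)) + ∫ y in B, f y * K (x - y) := by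
      have hfun : (fun y : Ed d => f y * ((x i - y i) / ‖x - y‖ ^ (d + 1)))
          = fun y : Ed d => f y * K (x - y) := by
        funext y
        simp [hK, PiLp.sub_apply]
      rw [truncRiesz, hfun, show {y : Ed d | r < ‖x - y‖} = S from rfl, hSAB,
        setIntegral_union hdisj hBm hFA hFB]
    -- bound on B
    have hBbound : |∫ y in B, f y * K (x - y)| ≤ I := by
      have h1 : |∫ y in B, f y * K (x - y)| ≤ ∫ y in B, |f y * K (x - y)| := by
        have := norm_integral_le_integral_norm (μ := volume.restrict B)
          (fun y : Ed d => f y * K (x - y))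
        simpa only [Real.norm_eq_abs] using this
      have h2 : ∫ y in B, |f y * K (x - y)| ≤ ∫ y in B, |f y| := by
        apply setIntegral_mono_on hFB.abs habs.integrableOn hBm
        intro y hy
        rw [abs_mul]
        have h3 : |K (x - y)| ≤ 1 := by
          refine (kernel_bound i _ (lt_trans one_pos hy)).trans ?_
          rw [inv_le_one_iff₀]
          right
          exact one_le_pow₀ (le_of_lt hy)
        nlinarith [abs_nonneg (f y)]
      have h4 : ∫ y in B, |f y| ≤ I :=
        setIntegral_le_integral (s := B) habs (ae_of_all _ fun y => abs_nonneg _)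
      linarith
    -- A is contained in a ball
    have hA_sub : A ⊆ Metric.closedBall x 1 := by
      intro y hy
      rw [Metric.mem_closedBall, dist_eq_norm, norm_sub_rev]
      exact hy.2
    have hAfin : volume A < ⊤ :=
      lt_of_le_of_lt (measure_mono hA_sub) (measure_closedBall_lt_top)
    have hKA : IntegrableOn (fun y : Ed d => K (x - y)) A volume := by
      refine Integrable.mono' (g := fun _ : Ed d => (r ^ d)⁻¹)
        (integrableOn_const hAfin.ne) hKmeas.aestronglyMeasurable.restrict ?_
      rw [ae_restrict_iff' hAm]
      filter_upwards with y hy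
      rw [Real.norm_eq_abs]
      exact hKb y hy.1
    -- cancellation on A
    have hA0 : ∫ y in A, K (x - y) = 0 := by
      set D : Set (Ed d) := {z : Ed d | r < ‖z‖ ∧ ‖z‖ ≤ 1} with hD
      have hInd : ∀ y : Ed d, D.indicator K (x - y)
          = A.indicator (fun y : Ed d => K (x - y)) y := by
        intro y
        by_cases h : y ∈ A
        · have h' : x - y ∈ D := h
          rw [Set.indicator_of_mem h', Set.indicator_of_mem h]
        · have h' : x - y ∉ D := h
          rw [Set.indicator_of_notMem h', Set.indicator_of_notMem h]
      calc ∫ y in A, K (x - y)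
          = ∫ y, A.indicator (fun y : Ed d => K (x - y)) y := (integral_indicator hAm).symm
        _ = ∫ y, D.indicator K (x - y) := by
            exact integral_congr_ae (ae_of_all _ fun y => (hInd y).symm)
        _ = ∫ z, D.indicator K z := integral_sub_left_eq_self (D.indicator K) volume x
        _ = 0 := annulus_cancel i r
    have hAint_sub : ∫ y in A, f y * K (x - y)
        = ∫ y in A, (f y - f x) * K (x - y) := by
      have h1 : IntegrableOn (fun y : Ed d => f x * K (x - y)) A volume := hKA.const_mul (f x)
      have h2 : ∫ y in A, (f y - f x) * K (x - y)
          = (∫ y in A, f y * K (x - y)) - ∫ y in A, f x * K (x - y) := by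
        simp_rw [sub_mul]
        exact integral_sub hFA h1
      rw [h2, integral_const_mul, hA0, mul_zero, sub_zero]
    -- the singular bound on A
    have hbnd_meas : Measurable fun y : Ed d => M * ‖x - y‖ ^ ((1:ℝ) - d) :=
      (hcont.measurable.pow_const _).const_mul M
    have hbnd_int : IntegrableOn (fun y : Ed d => M * ‖x - y‖ ^ ((1:ℝ) - d)) A volume := by
      refine Integrable.mono' (g := fun _ : Ed d => M * r ^ ((1:ℝ) - d))
        (integrableOn_const hAfin.ne) hbnd_meas.aestronglyMeasurable.restrict ?_
      rw [ae_restrict_iff' hAm]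
      filter_upwards with y hy
      rw [Real.norm_eq_abs, abs_of_nonneg (mul_nonneg hM0 (Real.rpow_nonneg (norm_nonneg _) _))]
      apply mul_le_mul_of_nonneg_left _ hM0
      apply Real.rpow_le_rpow_of_nonpos hr0 hy.1.le
      have h2 : (1:ℝ) ≤ d := by exact_mod_cast hd
      linarith
    have hptA : ∀ y ∈ A, ‖(f y - f x) * K (x - y)‖ ≤ M * ‖x - y‖ ^ ((1:ℝ) - d) := by
      intro y hy
      have hz : (0:ℝ) < ‖x - y‖ := lt_trans hr0 hy.1
      have hmvt : ‖f y - f x‖ ≤ M * ‖y - x‖ :=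
        convex_univ.norm_image_sub_le_of_norm_fderiv_le (fun t _ => hf_diff t)
          (fun t _ => hMle t) (Set.mem_univ x) (Set.mem_univ y)
      have hker : |K (x - y)| ≤ (‖x - y‖ ^ d)⁻¹ := kernel_bound i _ hz
      have hrpow : ‖x - y‖ ^ ((1:ℝ) - d) = ‖x - y‖ * (‖x - y‖ ^ d)⁻¹ := by
        rw [Real.rpow_sub hz, Real.rpow_one, Real.rpow_natCast, div_eq_mul_inv]
      rw [Real.norm_eq_abs, abs_mul, hrpow]
      calc |f y - f x| * |K (x - y)|
          ≤ (M * ‖y - x‖) * (‖x - y‖ ^ d)⁻¹ := by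
            apply mul_le_mul hmvt hker (abs_nonneg _)
            exact mul_nonneg hM0 (norm_nonneg _)
        _ = M * (‖x - y‖ * (‖x - y‖ ^ d)⁻¹) := by
            rw [norm_sub_rev]; ring
    have hAbs : |∫ y in A, (f y - f x) * K (x - y)|
        ≤ ∫ y in A, M * ‖x - y‖ ^ ((1:ℝ) - d) := by
      rw [← Real.norm_eq_abs]
      refine norm_integral_le_of_norm_le hbnd_int ?_
      rw [ae_restrict_iff' hAm]
      filter_upwards with y hy
      exact hptA y hy
    -- compute the singular integral bound
    have hsing : ∫ y in A, ‖x - y‖ ^ ((1:ℝ) - d) ≤ c := by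
      have hInd : ∀ y : Ed d, Set.indicator (Set.Ioc r 1)
          (fun s : ℝ => s ^ ((1:ℝ) - d)) ‖x - y‖
          = A.indicator (fun y : Ed d => ‖x - y‖ ^ ((1:ℝ) - d)) y := by
        intro y
        by_cases h : y ∈ A
        · have h' : ‖x - y‖ ∈ Set.Ioc r 1 := h
          rw [Set.indicator_of_mem h', Set.indicator_of_mem h]
        · have h' : ‖x - y‖ ∉ Set.Ioc r 1 := h
          rw [Set.indicator_of_notMem h', Set.indicator_of_notMem h]
      calc ∫ y in A, ‖x - y‖ ^ ((1:ℝ) - d)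
          = ∫ y, A.indicator (fun y : Ed d => ‖x - y‖ ^ ((1:ℝ) - d)) y :=
            (integral_indicator hAm).symm
        _ = ∫ y, Set.indicator (Set.Ioc r 1) (fun s : ℝ => s ^ ((1:ℝ) - d)) ‖x - y‖ :=
            integral_congr_ae (ae_of_all _ fun y => (hInd y).symm)
        _ = ∫ z : Ed d, Set.indicator (Set.Ioc r 1) (fun s : ℝ => s ^ ((1:ℝ) - d)) ‖z‖ :=
            integral_sub_left_eq_self
              (fun z : Ed d => Set.indicator (Set.Ioc r 1)
                (fun s : ℝ => s ^ ((1:ℝ) - d)) ‖z‖) volume x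
        _ ≤ c := norm_rpow_annulus_integral hd hr0 hr1
    have hAbound : |∫ y in A, f y * K (x - y)| ≤ c * M := by
      rw [hAint_sub]
      refine hAbs.trans ?_
      rw [integral_const_mul]
      calc M * ∫ y in A, ‖x - y‖ ^ ((1:ℝ) - d) ≤ M * c :=
            mul_le_mul_of_nonneg_left hsing hM0
        _ = c * M := mul_comm _ _
    rw [hsplit]
    calc |(∫ y in A, f y * K (x - y)) + ∫ y in B, f y * K (x - y)|
        ≤ |∫ y in A, f y * K (x - y)| + |∫ y in B, f y * K (x - y)| := abs_add_le _ _
      _ ≤ c * M + I := add_le_add hAbound hBbound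
  -- pass to the limit
  have hL : Tendsto (fun r : ℝ => |truncRiesz d i f x r|) (𝓝[>] (0:ℝ)) (𝓝 |L|) := hPV.abs
  have hev : ∀ᶠ r in 𝓝[>] (0:ℝ), |truncRiesz d i f x r| ≤ c * M + I :=
    mem_of_superset (Ioo_mem_nhdsGT_of_mem ⟨le_refl (0:ℝ), one_pos⟩) key
  have hfin : |L| ≤ c * M + I := le_of_tendsto hL hev
  nlinarith [mul_nonneg hc0 hI0]

end
end

section
/- Let d ≥ 1, N ≥ 1, and let f ∈ L_N(ℝ^d). Let f̂(ω) = ∫_{ℝ^d} f(x) e^{−i x·ω} dx denote the Fourier transform of f. Then for every multi-index β with |β| < N, the partial derivative D^β f̂ exists and is continuous on ℝ^d, and D^β f̂(ω) = o(|ω|^{N−1−|β|}) as ω → 0; that is, for every γ > 0 there exists ρ > 0 such that |D^β f̂(ω)| ≤ γ·|ω|^{N−1−|β|} whenever 0 < |ω| < ρ. -/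
open MeasureTheory Filter Topology Real
open scoped FourierTransform

noncomputable section

/-- The Fourier transform `f̂(ω) = ∫ f(x) e^{-i x·ω} dx`. -/
noncomputable def FT (d : ℕ) (f : Ed d → ℝ) (ω : Ed d) : ℂ :=
  ∫ x : Ed d, (f x : ℂ) * Complex.exp (-(Complex.I) * ((inner ℝ x ω : ℝ) : ℂ))

/-- Partial derivative in the `j`-th coordinate direction. -/
noncomputable def pderivE {d : ℕ} {F : Type*} [NormedAddCommGroup F] [NormedSpace ℝ F]
    (j : Fin d) (f : Ed d → F) : Ed d → F :=
  fun x => fderiv ℝ f x (EuclideanSpace.single j 1)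

/-- Iterated partial derivatives along a list of coordinate directions. -/
noncomputable def mderivL {d : ℕ} {F : Type*} [NormedAddCommGroup F] [NormedSpace ℝ F] :
    List (Fin d) → (Ed d → F) → (Ed d → F)
  | [], f => f
  | j :: l, f => pderivE j (mderivL l f)

/-- The list of coordinate directions encoding the multi-index `β`. -/
def mIdxList {d : ℕ} (β : Fin d → ℕ) : List (Fin d) :=
  (List.finRange d).flatMap fun j => List.replicate (β j) j

/-- The multi-index partial derivative `D^β f`. -/
noncomputable def mderiv {d : ℕ} {F : Type*} [NormedAddCommGroup F] [NormedSpace ℝ F]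
    (β : Fin d → ℕ) (f : Ed d → F) : Ed d → F :=
  mderivL (mIdxList β) f

/-! ### Auxiliary machinery -/

lemma integ_pow {d N : ℕ} {f : Ed d → ℝ} {C ε : ℝ} (hf : IsLN d N f C ε)
    (k : ℕ) (hk : k < N) :
    Integrable (fun x : Ed d => ‖x‖ ^ k * |f x|) := by
  have hr : (Module.finrank ℝ (Ed d) : ℝ) < (d:ℝ) + 1 - ε := by
    rw [finrank_euclideanSpace_fin]
    linarith [hf.eps_lt_one]
  refine ((integrable_one_add_norm (E := Ed d) hr).const_mul C).mono' ?_ ?_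
  · exact ((continuous_norm.pow k).mul hf.smooth.continuous.abs).aestronglyMeasurable
  · filter_upwards with x
    have hb : (1:ℝ) ≤ 1 + ‖x‖ := by linarith [norm_nonneg x]
    have hb0 : (0:ℝ) < 1 + ‖x‖ := by positivity
    have h1 : ‖x‖ ^ k ≤ (1 + ‖x‖) ^ (k:ℝ) := by
      rw [Real.rpow_natCast]
      exact pow_le_pow_left₀ (norm_nonneg x) (by linarith) k
    have h2 : ‖‖x‖ ^ k * |f x|‖ = ‖x‖ ^ k * |f x| := by
      rw [Real.norm_eq_abs, abs_of_nonneg (by positivity)]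
    rw [h2]
    calc ‖x‖ ^ k * |f x| ≤ (1 + ‖x‖) ^ (k:ℝ) * (C * (1 + ‖x‖) ^ (-(d:ℝ) - N + ε)) := by
          exact mul_le_mul h1 (hf.decay x) (abs_nonneg _) (by positivity)
      _ = C * ((1 + ‖x‖) ^ (k:ℝ) * (1 + ‖x‖) ^ (-(d:ℝ) - N + ε)) := by ring
      _ = C * (1 + ‖x‖) ^ ((k:ℝ) + (-(d:ℝ) - N + ε)) := by
          rw [← Real.rpow_add hb0]
      _ ≤ C * (1 + ‖x‖) ^ (-((d:ℝ) + 1 - ε)) := by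
          apply mul_le_mul_of_nonneg_left _ hf.Cpos.le
          apply Real.rpow_le_rpow_of_exponent_le hb
          have : (k:ℝ) + 1 ≤ (N:ℝ) := by exact_mod_cast hk
          linarith

noncomputable def mulList {d : ℕ} (l : List (Fin d)) (x : Ed d) : ℂ :=
  (l.map fun j => -Complex.I * (x j : ℂ)).prod

lemma coord_abs_le {d : ℕ} (x : Ed d) (j : Fin d) : |x j| ≤ ‖x‖ := by
  have h := abs_real_inner_le_norm (EuclideanSpace.single j (1:ℝ)) x
  rw [EuclideanSpace.inner_single_left, EuclideanSpace.norm_single] at h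
  simpa using h

lemma mulList_cons {d : ℕ} (j : Fin d) (l : List (Fin d)) (x : Ed d) :
    mulList (j :: l) x = (-Complex.I * (x j : ℂ)) * mulList l x := by
  simp [mulList]

lemma norm_mulList_le {d : ℕ} (l : List (Fin d)) (x : Ed d) :
    ‖mulList l x‖ ≤ ‖x‖ ^ l.length := by
  induction l with
  | nil => simp [mulList]
  | cons j l ih =>
      rw [mulList_cons, List.length_cons]
      have h1 : ‖-Complex.I * (x j : ℂ)‖ ≤ ‖x‖ := by
        rw [norm_mul]
        simpa [Complex.norm_real] using coord_abs_le x j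
      calc ‖(-Complex.I * (x j : ℂ)) * mulList l x‖
          = ‖-Complex.I * (x j : ℂ)‖ * ‖mulList l x‖ := norm_mul _ _
        _ ≤ ‖x‖ * ‖x‖ ^ l.length := by
            exact mul_le_mul h1 ih (norm_nonneg _) (norm_nonneg _)
        _ = ‖x‖ ^ (l.length + 1) := by ring

lemma continuous_mulList {d : ℕ} (l : List (Fin d)) : Continuous (mulList l) := by
  induction l with
  | nil => exact (continuous_const (y := (1:ℂ))).congr (fun x => by simp [mulList])
  | cons j l ih =>
      have : Continuous fun x : Ed d => -Complex.I * (x j : ℂ) :=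
        continuous_const.mul (Complex.continuous_ofReal.comp
          (EuclideanSpace.proj j : Ed d →L[ℝ] ℝ).continuous)
      exact (this.mul ih).congr (fun x => (mulList_cons j l x).symm)

lemma mIdxList_length {d : ℕ} (β : Fin d → ℕ) : (mIdxList β).length = ∑ j, β j := by
  rw [mIdxList, List.length_flatMap]
  simp only [Function.comp_def, List.length_replicate]
  rw [Fin.sum_univ_def]

lemma prod_flatMap {α : Type*} {M : Type*} [CommMonoid M] (g : α → List M) :
    ∀ (l : List α), (l.flatMap g).prod = (l.map (fun a => (g a).prod)).prod
  | [] => by simp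
  | a :: l => by
      rw [List.flatMap_cons, List.prod_append, List.map_cons, List.prod_cons, prod_flatMap g l]

lemma mulList_mIdx {d : ℕ} (β : Fin d → ℕ) (x : Ed d) :
    mulList (mIdxList β) x = (-Complex.I) ^ (∑ j, β j) * ∏ j, (x j : ℂ) ^ (β j) := by
  rw [mulList, mIdxList, List.map_flatMap]
  rw [prod_flatMap]
  simp only [List.map_replicate, List.prod_replicate, mul_pow]
  rw [← Fin.prod_univ_def]
  rw [Finset.prod_mul_distrib, Finset.prod_pow_eq_pow_sum]

/-! ### The Fourier kernel as a `VectorFourier.fourierIntegral` -/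

noncomputable def Lb (d : ℕ) : Ed d →L[ℝ] Ed d →L[ℝ] ℝ :=
  (2 * π)⁻¹ • (innerSL ℝ : Ed d →L[ℝ] Ed d →L[ℝ] ℝ)

lemma Lb_apply {d : ℕ} (x y : Ed d) : Lb d x y = (2 * π)⁻¹ * (inner ℝ x y : ℝ) := by
  simp [Lb]
  rfl

lemma kernel_eq {d : ℕ} (x ω : Ed d) :
    ((𝐞 (-(Lb d).toLinearMap₁₂ x ω) : Circle) : ℂ)
      = Complex.exp (-Complex.I * ((inner ℝ x ω : ℝ) : ℂ)) := by
  rw [Real.fourierChar_apply]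
  congr 1
  have h : (Lb d).toLinearMap₁₂ x ω = (2 * π)⁻¹ * (inner ℝ x ω : ℝ) := Lb_apply x ω
  rw [h]
  push_cast
  have hπ : (2 * (π:ℂ)) ≠ 0 := by simp [Real.pi_ne_zero]
  field_simp

noncomputable def FI {d : ℕ} (g : Ed d → ℂ) (ω : Ed d) : ℂ :=
  ∫ x : Ed d, g x * Complex.exp (-Complex.I * ((inner ℝ x ω : ℝ) : ℂ))

lemma FI_eq {d : ℕ} (g : Ed d → ℂ) :
    FI g = VectorFourier.fourierIntegral 𝐞 volume (Lb d).toLinearMap₁₂ g := by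
  funext ω
  rw [FI, VectorFourier.fourierIntegral]
  congr 1; funext x
  rw [Circle.smul_def, kernel_eq, smul_eq_mul, mul_comm]

/-! ### Integrability lemmas -/

lemma integ_g {d N : ℕ} {f : Ed d → ℝ} {C ε : ℝ} (hf : IsLN d N f C ε)
    (l : List (Fin d)) (h : l.length < N) :
    Integrable (fun x : Ed d => mulList l x * (f x : ℂ)) := by
  refine (integ_pow hf l.length h).mono' ?_ ?_
  · exact ((continuous_mulList l).mul
      (Complex.continuous_ofReal.comp hf.smooth.continuous)).aestronglyMeasurable
  · filter_upwards with x
    rw [norm_mul, Complex.norm_real, Real.norm_eq_abs]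
    exact mul_le_mul_of_nonneg_right (norm_mulList_le l x) (abs_nonneg _)

lemma integ_norm_mul {d N : ℕ} {f : Ed d → ℝ} {C ε : ℝ} (hf : IsLN d N f C ε)
    (l : List (Fin d)) (h : l.length + 1 < N) :
    Integrable (fun x : Ed d => ‖x‖ * ‖mulList l x * (f x : ℂ)‖) := by
  refine (integ_pow hf (l.length + 1) h).mono' ?_ ?_
  · exact (continuous_norm.mul ((continuous_mulList l).mul
      (Complex.continuous_ofReal.comp hf.smooth.continuous)).norm).aestronglyMeasurable
  · filter_upwards with x
    rw [Real.norm_eq_abs, abs_of_nonneg (by positivity)]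
    rw [norm_mul, Complex.norm_real, Real.norm_eq_abs, pow_succ']
    rw [mul_assoc]
    apply mul_le_mul_of_nonneg_left _ (norm_nonneg x)
    exact mul_le_mul_of_nonneg_right (norm_mulList_le l x) (abs_nonneg _)

lemma integ_c {d N : ℕ} {f : Ed d → ℝ} {C ε : ℝ} (hf : IsLN d N f C ε)
    (l : List (Fin d)) (ω : Ed d) (k : ℕ) (h : l.length + k < N) :
    Integrable (fun x : Ed d =>
      mulList l x * (f x : ℂ) * ((inner ℝ x ω : ℝ) : ℂ) ^ k) := by
  refine ((integ_pow hf (l.length + k) h).const_mul (‖ω‖ ^ k)).mono' ?_ ?_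
  · apply Continuous.aestronglyMeasurable
    apply Continuous.mul
    · exact (continuous_mulList l).mul
        (Complex.continuous_ofReal.comp hf.smooth.continuous)
    · exact (Complex.continuous_ofReal.comp
        (continuous_id.inner continuous_const)).pow k
  · filter_upwards with x
    rw [norm_mul, norm_mul, norm_pow, Complex.norm_real, Complex.norm_real,
      Real.norm_eq_abs, Real.norm_eq_abs]
    calc ‖mulList l x‖ * |f x| * |(inner ℝ x ω : ℝ)| ^ k
        ≤ ‖x‖ ^ l.length * |f x| * (‖x‖ * ‖ω‖) ^ k := by
          apply mul_le_mul
          · exact mul_le_mul_of_nonneg_right (norm_mulList_le l x) (abs_nonneg _)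
          · exact pow_le_pow_left₀ (abs_nonneg _) (abs_real_inner_le_norm x ω) k
          · positivity
          · positivity
      _ = ‖ω‖ ^ k * (‖x‖ ^ (l.length + k) * |f x|) := by
          rw [mul_pow, pow_add]; ring

lemma integ_smulRight {d N : ℕ} {f : Ed d → ℝ} {C ε : ℝ} (hf : IsLN d N f C ε)
    (l : List (Fin d)) (h : l.length + 1 < N) :
    Integrable (fun x : Ed d =>
      VectorFourier.fourierSMulRight (Lb d) (fun x => mulList l x * (f x : ℂ)) x) := by
  set g : Ed d → ℂ := fun x => mulList l x * (f x : ℂ) with hg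
  refine ((integ_norm_mul hf l h).const_mul (2 * π * ‖Lb d‖)).mono' ?_ ?_
  · exact (integ_g hf l (by omega)).aestronglyMeasurable.fourierSMulRight
  · filter_upwards with x
    calc ‖VectorFourier.fourierSMulRight (Lb d) g x‖
        ≤ 2 * π * ‖Lb d‖ * ‖x‖ * ‖g x‖ := VectorFourier.norm_fourierSMulRight_le (Lb d) g x
      _ = 2 * π * ‖Lb d‖ * (‖x‖ * ‖g x‖) := by ring

lemma pderivE_FI {d N : ℕ} {f : Ed d → ℝ} {C ε : ℝ} (hf : IsLN d N f C ε)
    (l : List (Fin d)) (h : l.length + 1 < N) (j : Fin d) :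
    pderivE j (FI (fun x => mulList l x * (f x : ℂ)))
      = FI (fun x => mulList (j :: l) x * (f x : ℂ)) := by
  set g : Ed d → ℂ := fun x => mulList l x * (f x : ℂ) with hg
  funext ω
  have hint : Integrable g := integ_g hf l (by omega)
  have hint' : Integrable (fun x : Ed d => ‖x‖ * ‖g x‖) := integ_norm_mul hf l h
  have hD := VectorFourier.hasFDerivAt_fourierIntegral (Lb d) hint hint' ω
  have hfd : fderiv ℝ (FI g) ω
      = VectorFourier.fourierIntegral 𝐞 volume (Lb d).toLinearMap₁₂
        (VectorFourier.fourierSMulRight (Lb d) g) ω := by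
    rw [FI_eq]; exact hD.fderiv
  show fderiv ℝ (FI g) ω (EuclideanSpace.single j 1) = _
  rw [hfd, VectorFourier.fourierIntegral]
  have hIb : Integrable (fun x : Ed d =>
      (𝐞 (-(Lb d).toLinearMap₁₂ x ω) : Circle) • VectorFourier.fourierSMulRight (Lb d) g x) := by
    exact (VectorFourier.fourierIntegral_convergent_iff continuous_fourierChar
      (by apply (Lb d).continuous₂ :
        Continuous fun p : Ed d × Ed d => (Lb d).toLinearMap₁₂ p.1 p.2) ω).2
      (integ_smulRight hf l h)
  rw [ContinuousLinearMap.integral_apply hIb]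
  rw [FI]
  congr 1; funext x
  rw [Circle.smul_def, ContinuousLinearMap.smul_apply, VectorFourier.fourierSMulRight_apply]
  rw [kernel_eq]
  have hLx : Lb d x (EuclideanSpace.single j 1) = (2 * π)⁻¹ * x j := by
    rw [Lb_apply, real_inner_comm, EuclideanSpace.inner_single_left]
    simp
  rw [hLx, mulList_cons]
  simp only [smul_eq_mul, Complex.real_smul, Complex.ofReal_mul, Complex.ofReal_inv,
    Complex.ofReal_ofNat]
  have hπ : (π:ℂ) ≠ 0 := by exact_mod_cast Real.pi_ne_zero
  field_simp
  ring

lemma mderivL_FT {d N : ℕ} {f : Ed d → ℝ} {C ε : ℝ} (hf : IsLN d N f C ε) :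
    ∀ l : List (Fin d), l.length < N →
      mderivL l (FT d f) = FI (fun x => mulList l x * (f x : ℂ))
  | [], _ => by
      funext ω
      simp only [mderivL, FT, FI, mulList, List.map_nil, List.prod_nil, one_mul]
  | j :: l, h => by
      have hl : l.length < N := by simp only [List.length_cons] at h; omega
      show pderivE j (mderivL l (FT d f)) = _
      rw [mderivL_FT hf l hl]
      exact pderivE_FI hf l (by simpa using h) j

/-! ### Taylor remainder of the complex exponential -/

noncomputable def expRem (M : ℕ) (t : ℝ) : ℂ :=
  Complex.exp (Complex.I * t) - ∑ k ∈ Finset.range M, (Complex.I * t) ^ k / k.factorial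

lemma continuous_expRem (M : ℕ) : Continuous (expRem M) := by
  apply Continuous.sub
  · exact Complex.continuous_exp.comp (continuous_const.mul Complex.continuous_ofReal)
  · apply continuous_finset_sum
    intro k _
    exact ((continuous_const.mul Complex.continuous_ofReal).pow k).div_const _

lemma hasDerivAt_expRem (M : ℕ) (t : ℝ) :
    HasDerivAt (expRem (M + 1)) (Complex.I * expRem M t) t := by
  have h1 : HasDerivAt (fun s : ℝ => Complex.exp (Complex.I * s))
      (Complex.I * Complex.exp (Complex.I * t)) t := by
    have hz : HasDerivAt (fun z : ℂ => Complex.exp (Complex.I * z))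
        (Complex.exp (Complex.I * t) * Complex.I) (t:ℂ) := by
      simpa using ((hasDerivAt_id ((t:ℝ):ℂ)).const_mul Complex.I).cexp
    simpa [mul_comm] using hz.comp_ofReal
  have h2 : HasDerivAt
      (fun s : ℝ => ∑ k ∈ Finset.range (M+1), (Complex.I * (s:ℂ)) ^ k / k.factorial)
      (∑ k ∈ Finset.range (M+1),
        (k : ℂ) * (Complex.I * t) ^ (k-1) * Complex.I / k.factorial) t := by
    apply HasDerivAt.fun_sum
    intro k _
    have hz : HasDerivAt (fun z : ℂ => (Complex.I * z) ^ k / k.factorial)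
        ((k : ℂ) * (Complex.I * t) ^ (k-1) * Complex.I / k.factorial) (t:ℂ) := by
      simpa using (((hasDerivAt_id ((t:ℝ):ℂ)).const_mul Complex.I).pow k).div_const
        (k.factorial : ℂ)
    exact hz.comp_ofReal
  have hsum : (∑ k ∈ Finset.range (M+1),
        (k : ℂ) * (Complex.I * t) ^ (k-1) * Complex.I / k.factorial)
      = Complex.I * ∑ k ∈ Finset.range M, (Complex.I * t) ^ k / k.factorial := by
    rw [Finset.sum_range_succ', Finset.mul_sum]
    simp only [Nat.cast_zero, zero_mul, Nat.factorial_zero, Nat.cast_one, div_one, add_zero,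
      Nat.add_sub_cancel]
    apply Finset.sum_congr rfl
    intro k _
    have hfac : ((k+1).factorial : ℂ) = (k+1) * k.factorial := by
      rw [Nat.factorial_succ]; push_cast; ring
    rw [hfac]
    have hk1 : ((k:ℂ) + 1) ≠ 0 := Nat.cast_add_one_ne_zero k
    have hkf : ((k.factorial : ℂ)) ≠ 0 := by
      exact_mod_cast Nat.cast_ne_zero.mpr k.factorial_ne_zero
    field_simp
    push_cast
    ring
  have h3 := h1.sub h2
  rw [hsum] at h3
  rw [show Complex.I * expRem M t = Complex.I * Complex.exp (Complex.I * t)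
    - Complex.I * ∑ k ∈ Finset.range M, (Complex.I * t) ^ k / k.factorial by rw [expRem, mul_sub]]
  exact h3

lemma expRem_zero (M : ℕ) : expRem (M+1) 0 = 0 := by
  simp only [expRem, Complex.ofReal_zero, mul_zero, Complex.exp_zero]
  rw [Finset.sum_eq_single 0]
  · simp
  · intro k _ hk
    simp [zero_pow hk]
  · intro h
    exact absurd (Finset.mem_range.mpr (Nat.succ_pos M)) h

lemma expRem_sharp : ∀ M : ℕ, ∀ t : ℝ, 0 ≤ t → ‖expRem M t‖ ≤ t ^ M / M.factorial := by
  intro M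
  induction M with
  | zero =>
      intro t _
      simp only [expRem, Finset.range_zero, Finset.sum_empty, sub_zero, pow_zero,
        Nat.factorial_zero, Nat.cast_one]
      rw [mul_comm, Complex.norm_exp_ofReal_mul_I]
      norm_num
  | succ M ih =>
      intro t ht
      have hint : (∫ s in (0:ℝ)..t, Complex.I * expRem M s)
          = expRem (M+1) t - expRem (M+1) 0 :=
        intervalIntegral.integral_eq_sub_of_hasDerivAt
          (fun s _ => hasDerivAt_expRem M s)
          ((continuous_const.mul (continuous_expRem M)).intervalIntegrable 0 t)
      rw [expRem_zero, sub_zero] at hint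
      calc ‖expRem (M+1) t‖ = ‖∫ s in (0:ℝ)..t, Complex.I * expRem M s‖ := by rw [hint]
        _ ≤ ∫ s in (0:ℝ)..t, ‖Complex.I * expRem M s‖ :=
            intervalIntegral.norm_integral_le_integral_norm ht
        _ ≤ ∫ s in (0:ℝ)..t, s ^ M / M.factorial := by
            apply intervalIntegral.integral_mono_on ht
            · exact ((continuous_const.mul (continuous_expRem M)).norm).intervalIntegrable 0 t
            · exact ((continuous_pow M).div_const _).intervalIntegrable 0 t
            · intro s hs
              rw [norm_mul, Complex.norm_I, one_mul]
              exact ih s hs.1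
        _ = (∫ s in (0:ℝ)..t, s ^ M) / M.factorial := by
            rw [intervalIntegral.integral_div]
        _ = t ^ (M+1) / (M+1).factorial := by
            rw [integral_pow]
            rw [Nat.factorial_succ]
            push_cast
            have hM : ((M:ℝ) + 1) ≠ 0 := by positivity
            have hMf : ((M.factorial : ℝ)) ≠ 0 := by
              exact_mod_cast Nat.cast_ne_zero.mpr M.factorial_ne_zero
            field_simp
            simp

lemma expRem_neg (M : ℕ) (t : ℝ) : expRem M (-t) = starRingEnd ℂ (expRem M t) := by
  rw [expRem, expRem, map_sub, map_sum]
  congr 1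
  · rw [← Complex.exp_conj]
    congr 1
    rw [map_mul, Complex.conj_I, Complex.conj_ofReal]
    push_cast
    ring
  · apply Finset.sum_congr rfl
    intro k _
    rw [map_div₀, map_pow, map_mul, Complex.conj_I, Complex.conj_ofReal, map_natCast]
    congr 1
    push_cast
    ring

lemma expRem_abs_sharp (M : ℕ) (t : ℝ) : ‖expRem M t‖ ≤ |t| ^ M / M.factorial := by
  rcases le_total 0 t with h | h
  · rw [abs_of_nonneg h]; exact expRem_sharp M t h
  · have h2 : ‖expRem M t‖ = ‖expRem M (-t)‖ := by
      rw [expRem_neg, RCLike.norm_conj]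
    rw [h2, abs_of_nonpos h]
    exact expRem_sharp M (-t) (by linarith)

lemma expRem_abs_two (M : ℕ) (t : ℝ) :
    ‖expRem (M+1) t‖ ≤ 2 * |t| ^ M / M.factorial := by
  have h1 : expRem (M+1) t = expRem M t - (Complex.I * t) ^ M / M.factorial := by
    rw [expRem, expRem, Finset.sum_range_succ]
    ring
  rw [h1]
  have h2 : ‖(Complex.I * (t:ℂ)) ^ M / (M.factorial : ℂ)‖ = |t| ^ M / M.factorial := by
    rw [norm_div, norm_pow, norm_mul, Complex.norm_I, one_mul, Complex.norm_real,
      Real.norm_eq_abs]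
    congr 1
    simp
  calc ‖expRem M t - (Complex.I * t) ^ M / M.factorial‖
      ≤ ‖expRem M t‖ + ‖(Complex.I * (t:ℂ)) ^ M / (M.factorial : ℂ)‖ := norm_sub_le _ _
    _ ≤ |t| ^ M / M.factorial + |t| ^ M / M.factorial := by
        rw [h2]
        exact add_le_add (expRem_abs_sharp M t) le_rfl
    _ = 2 * |t| ^ M / M.factorial := by ring

/-! ### Vanishing moments -/

lemma inner_eq_sum {d : ℕ} (x ω : Ed d) : (inner ℝ x ω : ℝ) = ∑ i, x i * ω i := by
  rw [PiLp.inner_apply]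
  simp [RCLike.inner_apply, mul_comm]

lemma prod_abs_le {d : ℕ} (c : Fin d → ℕ) (x : Ed d) :
    |∏ j, x j ^ c j| ≤ ‖x‖ ^ (∑ j, c j) := by
  rw [Finset.abs_prod, ← Finset.prod_pow_eq_pow_sum]
  apply Finset.prod_le_prod (fun j _ => abs_nonneg _)
  intro j _
  rw [abs_pow]
  exact pow_le_pow_left₀ (abs_nonneg _) (coord_abs_le x j) _

lemma integ_real {d N : ℕ} {f : Ed d → ℝ} {C ε : ℝ} (hf : IsLN d N f C ε)
    (c : Fin d → ℕ) (ω : Ed d) (k : ℕ) (h : (∑ j, c j) + k < N) :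
    Integrable (fun x : Ed d => (∏ j, x j ^ c j) * (inner ℝ x ω : ℝ) ^ k * f x) := by
  refine ((integ_pow hf ((∑ j, c j) + k) h).const_mul (‖ω‖ ^ k)).mono' ?_ ?_
  · apply Continuous.aestronglyMeasurable
    apply Continuous.mul
    apply Continuous.mul
    · exact continuous_finset_prod _ fun j _ =>
        ((EuclideanSpace.proj j : Ed d →L[ℝ] ℝ).continuous).pow _
    · exact (continuous_id.inner continuous_const).pow k
    · exact hf.smooth.continuous
  · filter_upwards with x
    rw [Real.norm_eq_abs, abs_mul, abs_mul, abs_pow]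
    calc |∏ j, x j ^ c j| * |(inner ℝ x ω : ℝ)| ^ k * |f x|
        ≤ ‖x‖ ^ (∑ j, c j) * (‖x‖ * ‖ω‖) ^ k * |f x| := by
          apply mul_le_mul_of_nonneg_right _ (abs_nonneg _)
          apply mul_le_mul (prod_abs_le c x)
            (pow_le_pow_left₀ (abs_nonneg _) (abs_real_inner_le_norm x ω) k)
            (by positivity) (by positivity)
      _ = ‖ω‖ ^ k * (‖x‖ ^ ((∑ j, c j) + k) * |f x|) := by
          rw [mul_pow, pow_add]; ring

lemma moment_zero {d N : ℕ} {f : Ed d → ℝ} {C ε : ℝ} (hf : IsLN d N f C ε) :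
    ∀ (k : ℕ) (c : Fin d → ℕ) (ω : Ed d), (∑ j, c j) + k < N →
      ∫ x : Ed d, (∏ j, x j ^ c j) * (inner ℝ x ω : ℝ) ^ k * f x = 0
  | 0, c, ω, h => by
      have := hf.moments c (by omega)
      simpa using this
  | (k+1), c, ω, h => by
      have hupd : ∀ (x : Ed d) (i : Fin d),
          (∏ j, x j ^ (Function.update c i (c i + 1)) j) = x i * ∏ j, x j ^ c j := by
        intro x i
        rw [← Finset.prod_erase_mul _ _ (Finset.mem_univ i),
          ← Finset.prod_erase_mul _ (fun j => x j ^ c j) (Finset.mem_univ i)]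
        rw [Function.update_self]
        rw [Finset.prod_congr rfl (fun j hj => by
          rw [Function.update_of_ne (Finset.ne_of_mem_erase hj)])]
        rw [pow_succ]
        ring
      have hsum : ∀ i : Fin d, (∑ j, (Function.update c i (c i + 1)) j) = (∑ j, c j) + 1 := by
        intro i
        rw [Finset.sum_update_of_mem (Finset.mem_univ i), Finset.sdiff_singleton_eq_erase]
        have h2 : (∑ j ∈ Finset.univ.erase i, c j) + c i = ∑ j, c j :=
          Finset.sum_erase_add _ _ (Finset.mem_univ i)
        omega
      have hexp : ∀ x : Ed d, (∏ j, x j ^ c j) * (inner ℝ x ω : ℝ) ^ (k+1) * f x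
          = ∑ i, ω i * ((∏ j, x j ^ (Function.update c i (c i + 1)) j)
              * (inner ℝ x ω : ℝ) ^ k * f x) := by
        intro x
        have hin : (inner ℝ x ω : ℝ) = ∑ i, x i * ω i := inner_eq_sum x ω
        calc (∏ j, x j ^ c j) * (inner ℝ x ω : ℝ) ^ (k+1) * f x
            = (∑ i, x i * ω i) * ((∏ j, x j ^ c j) * (inner ℝ x ω : ℝ) ^ k * f x) := by
              rw [← hin]; ring
          _ = ∑ i, (x i * ω i) * ((∏ j, x j ^ c j) * (inner ℝ x ω : ℝ) ^ k * f x) :=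
              Finset.sum_mul _ _ _
          _ = ∑ i, ω i * ((∏ j, x j ^ (Function.update c i (c i + 1)) j)
                * (inner ℝ x ω : ℝ) ^ k * f x) := by
              apply Finset.sum_congr rfl
              intro i _
              rw [hupd x i]
              ring
      rw [show (fun x : Ed d => (∏ j, x j ^ c j) * (inner ℝ x ω : ℝ) ^ (k+1) * f x)
          = fun x => ∑ i, ω i * ((∏ j, x j ^ (Function.update c i (c i + 1)) j)
              * (inner ℝ x ω : ℝ) ^ k * f x) from funext hexp]
      rw [integral_finset_sum _ (fun i _ => by
        exact (integ_real hf (Function.update c i (c i + 1)) ω k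
          (by rw [hsum i]; omega)).const_mul (ω i))]
      apply Finset.sum_eq_zero
      intro i _
      rw [integral_const_mul, moment_zero hf k (Function.update c i (c i + 1)) ω
        (by rw [hsum i]; omega), mul_zero]

lemma moment_zero_c {d N : ℕ} {f : Ed d → ℝ} {C ε : ℝ} (hf : IsLN d N f C ε)
    (β : Fin d → ℕ) (ω : Ed d) (k : ℕ) (h : (∑ j, β j) + k < N) :
    ∫ x : Ed d, mulList (mIdxList β) x * (f x : ℂ) * ((inner ℝ x ω : ℝ) : ℂ) ^ k = 0 := by
  have hpt : ∀ x : Ed d, mulList (mIdxList β) x * (f x : ℂ) * ((inner ℝ x ω : ℝ) : ℂ) ^ k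
      = (-Complex.I) ^ (∑ j, β j)
          * ((((∏ j, x j ^ β j) * (inner ℝ x ω : ℝ) ^ k * f x : ℝ)) : ℂ) := by
    intro x
    rw [mulList_mIdx]
    push_cast
    ring
  rw [show (fun x : Ed d => mulList (mIdxList β) x * (f x : ℂ) * ((inner ℝ x ω : ℝ) : ℂ) ^ k)
      = fun x => (-Complex.I) ^ (∑ j, β j)
          * ((((∏ j, x j ^ β j) * (inner ℝ x ω : ℝ) ^ k * f x : ℝ)) : ℂ) from funext hpt]
  rw [integral_const_mul]
  have hre : (∫ x : Ed d, ((((∏ j, x j ^ β j) * (inner ℝ x ω : ℝ) ^ k * f x : ℝ)) : ℂ))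
      = ((∫ x : Ed d, (∏ j, x j ^ β j) * (inner ℝ x ω : ℝ) ^ k * f x : ℝ) : ℂ) :=
    integral_ofReal
  rw [hre, moment_zero hf k β ω h]
  simp

/-! ### The remainder representation -/

lemma expRem_min_bound (M : ℕ) (s a b : ℝ) (ha : 0 ≤ a) (hb : 0 ≤ b) (hs : |s| ≤ a * b) :
    ‖expRem (M+1) s‖
      ≤ a ^ M * b ^ M * min (2 / (M.factorial : ℝ)) (a * b / ((M+1).factorial : ℝ)) := by
  have hpow : ∀ k : ℕ, |s| ^ k ≤ (a * b) ^ k := fun k =>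
    pow_le_pow_left₀ (abs_nonneg s) hs k
  rcases le_total (2 / (M.factorial:ℝ)) (a * b / (((M+1).factorial : ℕ):ℝ)) with hmin | hmin
  · rw [min_eq_left hmin]
    calc ‖expRem (M+1) s‖ ≤ 2 * |s| ^ M / M.factorial := expRem_abs_two M s
      _ ≤ 2 * (a*b) ^ M / M.factorial := by gcongr
      _ = a ^ M * b ^ M * (2 / M.factorial) := by rw [mul_pow]; ring
  · rw [min_eq_right hmin]
    calc ‖expRem (M+1) s‖ ≤ |s| ^ (M+1) / (M+1).factorial := expRem_abs_sharp (M+1) s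
      _ ≤ (a*b) ^ (M+1) / (M+1).factorial := by gcongr
      _ = a ^ M * b ^ M * (a * b / ((M+1).factorial : ℝ)) := by
          rw [pow_succ, mul_pow]; ring

lemma integ_rem {d N : ℕ} {f : Ed d → ℝ} {C ε : ℝ} (hf : IsLN d N f C ε)
    (l : List (Fin d)) (M : ℕ) (ω : Ed d) (h : l.length + M < N) :
    Integrable (fun x : Ed d =>
      mulList l x * (f x : ℂ) * expRem (M+1) (-(inner ℝ x ω : ℝ))) := by
  refine ((integ_pow hf (l.length + M) h).const_mul (2 * ‖ω‖^M / M.factorial)).mono' ?_ ?_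
  · apply Continuous.aestronglyMeasurable
    exact ((continuous_mulList l).mul
        (Complex.continuous_ofReal.comp hf.smooth.continuous)).mul
      ((continuous_expRem (M+1)).comp (continuous_id.inner continuous_const).neg)
  · filter_upwards with x
    rw [norm_mul, norm_mul, Complex.norm_real, Real.norm_eq_abs]
    calc ‖mulList l x‖ * |f x| * ‖expRem (M+1) (-(inner ℝ x ω : ℝ))‖
        ≤ ‖x‖ ^ l.length * |f x| * (2 * |(-(inner ℝ x ω : ℝ))| ^ M / M.factorial) := by
          apply mul_le_mul
            (mul_le_mul_of_nonneg_right (norm_mulList_le l x) (abs_nonneg _))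
            (expRem_abs_two M _) (norm_nonneg _) (by positivity)
      _ ≤ ‖x‖ ^ l.length * |f x| * (2 * (‖x‖ * ‖ω‖) ^ M / M.factorial) := by
          gcongr
          rw [abs_neg]
          exact abs_real_inner_le_norm x ω
      _ = 2 * ‖ω‖^M / M.factorial * (‖x‖ ^ (l.length + M) * |f x|) := by
          rw [mul_pow, pow_add]; ring

lemma mderiv_eq_rem {d N : ℕ} {f : Ed d → ℝ} {C ε : ℝ} (hf : IsLN d N f C ε)
    (hN : 1 ≤ N) (β : Fin d → ℕ) (hβ : (∑ j, β j) < N) (ω : Ed d) :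
    mderiv β (FT d f) ω
      = ∫ x : Ed d, mulList (mIdxList β) x * (f x : ℂ)
          * expRem (N - 1 - (∑ j, β j) + 1) (-(inner ℝ x ω : ℝ)) := by
  set m := ∑ j, β j with hm
  set M := N - 1 - m with hMdef
  set g : Ed d → ℂ := fun x => mulList (mIdxList β) x * (f x : ℂ) with hg
  have hlen : (mIdxList β).length = m := mIdxList_length β
  have h1 : mderiv β (FT d f) = FI g := by
    rw [mderiv]
    exact mderivL_FT hf _ (by rw [hlen]; omega)
  rw [h1, FI]
  have hpt : ∀ x : Ed d, g x * Complex.exp (-Complex.I * ((inner ℝ x ω : ℝ) : ℂ))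
      = g x * expRem (M+1) (-(inner ℝ x ω : ℝ))
        + ∑ k ∈ Finset.range (M+1),
            ((-Complex.I) ^ k / k.factorial) * (g x * ((inner ℝ x ω : ℝ) : ℂ) ^ k) := by
    intro x
    set t : ℝ := (inner ℝ x ω : ℝ) with htdef
    have hrem : expRem (M+1) (-t)
        = Complex.exp (-Complex.I * (t:ℂ))
          - ∑ k ∈ Finset.range (M+1), ((-Complex.I) ^ k * (t:ℂ) ^ k) / k.factorial := by
      rw [expRem]
      congr 1
      · congr 1
        push_cast
        ring
      · apply Finset.sum_congr rfl
        intro k _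
        congr 1
        rw [← mul_pow]
        congr 1
        push_cast
        ring
    calc g x * Complex.exp (-Complex.I * (t:ℂ))
        = g x * expRem (M+1) (-t)
          + g x * ∑ k ∈ Finset.range (M+1), ((-Complex.I) ^ k * (t:ℂ) ^ k) / k.factorial := by
          rw [hrem]; ring
      _ = _ := by
          rw [Finset.mul_sum]
          congr 1
          apply Finset.sum_congr rfl
          intro k _
          ring
  rw [show (fun x : Ed d => g x * Complex.exp (-Complex.I * ((inner ℝ x ω : ℝ) : ℂ)))
      = fun x => g x * expRem (M+1) (-(inner ℝ x ω : ℝ))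
        + ∑ k ∈ Finset.range (M+1),
            ((-Complex.I) ^ k / k.factorial) * (g x * ((inner ℝ x ω : ℝ) : ℂ) ^ k)
    from funext hpt]
  rw [integral_add (integ_rem hf (mIdxList β) M ω (by rw [hlen]; omega))
    (integrable_finset_sum _ (fun k hk => by
      exact (integ_c hf (mIdxList β) ω k
        (by rw [hlen]; have := Finset.mem_range.mp hk; omega)).const_mul _))]
  rw [integral_finset_sum _ (fun k hk => by
      exact (integ_c hf (mIdxList β) ω k
        (by rw [hlen]; have := Finset.mem_range.mp hk; omega)).const_mul _)]
  rw [Finset.sum_eq_zero (fun k hk => by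
    rw [integral_const_mul, moment_zero_c hf β ω k
      (by have := Finset.mem_range.mp hk; omega), mul_zero])]
  rw [add_zero]

/-! ### The dominating integral -/

noncomputable def Psi {d : ℕ} (f : Ed d → ℝ) (n M : ℕ) (r : ℝ) : ℝ :=
  ∫ x : Ed d, |f x| * ‖x‖ ^ n * min (2 / (M.factorial : ℝ)) (‖x‖ * r / ((M+1).factorial : ℝ))

lemma psi_integrable {d N : ℕ} {f : Ed d → ℝ} {C ε : ℝ} (hf : IsLN d N f C ε)
    (hN : 1 ≤ N) (M : ℕ) (r : ℝ) (hr : 0 ≤ r) :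
    Integrable (fun x : Ed d =>
      |f x| * ‖x‖ ^ (N-1) * min (2 / (M.factorial : ℝ)) (‖x‖ * r / ((M+1).factorial : ℝ))) := by
  refine ((integ_pow hf (N-1) (by omega)).const_mul (2 / M.factorial)).mono' ?_ ?_
  · apply Continuous.aestronglyMeasurable
    exact (hf.smooth.continuous.abs.mul (continuous_norm.pow _)).mul
      (continuous_const.min ((continuous_norm.mul continuous_const).div_const _))
  · filter_upwards with x
    have hmin0 : 0 ≤ min (2 / (M.factorial:ℝ)) (‖x‖ * r / ((M+1).factorial:ℝ)) :=
      le_min (by positivity) (by positivity)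
    rw [Real.norm_eq_abs,
      abs_of_nonneg (mul_nonneg (mul_nonneg (abs_nonneg _) (by positivity)) hmin0)]
    calc |f x| * ‖x‖ ^ (N-1) * min (2 / (M.factorial : ℝ)) (‖x‖ * r / ((M+1).factorial : ℝ))
        ≤ |f x| * ‖x‖ ^ (N-1) * (2 / M.factorial) :=
          mul_le_mul_of_nonneg_left (min_le_left _ _) (by positivity)
      _ = 2 / M.factorial * (‖x‖ ^ (N-1) * |f x|) := by ring

lemma psi_mono {d N : ℕ} {f : Ed d → ℝ} {C ε : ℝ} (hf : IsLN d N f C ε)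
    (hN : 1 ≤ N) (M : ℕ) {r1 r2 : ℝ} (h1 : 0 ≤ r1) (h12 : r1 ≤ r2) :
    Psi f (N-1) M r1 ≤ Psi f (N-1) M r2 := by
  apply integral_mono_of_nonneg
  · filter_upwards with x
    exact mul_nonneg (mul_nonneg (abs_nonneg _) (by positivity))
      (le_min (by positivity) (by positivity))
  · exact psi_integrable hf hN M r2 (le_trans h1 h12)
  · filter_upwards with x
    apply mul_le_mul_of_nonneg_left _ (mul_nonneg (abs_nonneg _) (by positivity))
    apply min_le_min le_rfl
    gcongr

lemma psi_tendsto {d N : ℕ} {f : Ed d → ℝ} {C ε : ℝ} (hf : IsLN d N f C ε)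
    (hN : 1 ≤ N) (M : ℕ) :
    Tendsto (fun n : ℕ => Psi f (N-1) M (1/(n+1))) atTop (𝓝 0) := by
  have := MeasureTheory.tendsto_integral_of_dominated_convergence
    (μ := (volume : Measure (Ed d)))
    (F := fun (n : ℕ) (x : Ed d) =>
      |f x| * ‖x‖ ^ (N-1) * min (2 / (M.factorial : ℝ)) (‖x‖ * (1/((n:ℝ)+1)) / ((M+1).factorial : ℝ)))
    (f := fun _ : Ed d => (0:ℝ))
    (bound := fun x : Ed d => 2 / M.factorial * (‖x‖ ^ (N-1) * |f x|))
    ?_ ?_ ?_ ?_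
  · simpa [Psi] using this
  · intro n
    apply Continuous.aestronglyMeasurable
    exact (hf.smooth.continuous.abs.mul (continuous_norm.pow _)).mul
      (continuous_const.min ((continuous_norm.mul continuous_const).div_const _))
  · exact (integ_pow hf (N-1) (by omega)).const_mul _
  · intro n
    filter_upwards with x
    have hmin0 : 0 ≤ min (2 / (M.factorial:ℝ)) (‖x‖ * (1/((n:ℝ)+1)) / ((M+1).factorial:ℝ)) :=
      le_min (by positivity) (by positivity)
    rw [Real.norm_eq_abs,
      abs_of_nonneg (mul_nonneg (mul_nonneg (abs_nonneg _) (by positivity)) hmin0)]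
    calc |f x| * ‖x‖ ^ (N-1) * min (2 / (M.factorial : ℝ)) (‖x‖ * (1/((n:ℝ)+1)) / ((M+1).factorial : ℝ))
        ≤ |f x| * ‖x‖ ^ (N-1) * (2 / M.factorial) :=
          mul_le_mul_of_nonneg_left (min_le_left _ _) (by positivity)
      _ = 2 / M.factorial * (‖x‖ ^ (N-1) * |f x|) := by ring
  · filter_upwards with x
    apply squeeze_zero
      (g := fun n : ℕ => (|f x| * ‖x‖ ^ (N-1) * (‖x‖ / (M+1).factorial)) * (1/((n:ℝ)+1)))
    · intro n
      exact mul_nonneg (mul_nonneg (abs_nonneg _) (by positivity))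
        (le_min (by positivity) (by positivity))
    · intro n
      calc |f x| * ‖x‖ ^ (N-1) * min (2 / (M.factorial : ℝ)) (‖x‖ * (1/((n:ℝ)+1)) / ((M+1).factorial : ℝ))
          ≤ |f x| * ‖x‖ ^ (N-1) * (‖x‖ * (1/((n:ℝ)+1)) / ((M+1).factorial : ℝ)) :=
            mul_le_mul_of_nonneg_left (min_le_right _ _)
              (mul_nonneg (abs_nonneg _) (by positivity))
        _ = (|f x| * ‖x‖ ^ (N-1) * (‖x‖ / (M+1).factorial)) * (1/((n:ℝ)+1)) := by ring
    · have hlim : Tendsto (fun n : ℕ => 1/((n:ℝ)+1)) atTop (𝓝 0) :=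
        tendsto_one_div_add_atTop_nhds_zero_nat
      simpa using hlim.const_mul (|f x| * ‖x‖ ^ (N-1) * (‖x‖ / (M+1).factorial))

/-- For `f ∈ L_N(ℝ^d)`, the Fourier transform has continuous derivatives up to order `N-1`, and
`D^β f̂(ω) = o(‖ω‖^(N-1-|β|))` as `ω → 0`. -/
theorem fourier_deriv_little_o (d N : ℕ) (hd : 1 ≤ d) (hN : 1 ≤ N)
    (f : Ed d → ℝ) (C ε : ℝ) (hf : IsLN d N f C ε) :
    ContDiff ℝ (N - 1 : ℕ) (FT d f) ∧
    ∀ β : Fin d → ℕ, (∑ j, β j) < N →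
      ∀ γ : ℝ, 0 < γ → ∃ ρ : ℝ, 0 < ρ ∧ ∀ ω : Ed d, 0 < ‖ω‖ → ‖ω‖ < ρ →
        ‖mderiv β (FT d f) ω‖ ≤ γ * ‖ω‖ ^ ((N : ℝ) - 1 - (∑ j, β j)) := by

  constructor
  · have heq : FT d f = VectorFourier.fourierIntegral 𝐞 volume (Lb d).toLinearMap₁₂
        (fun x => (f x : ℂ)) := by
      rw [show FT d f = FI (fun x => (f x : ℂ)) from rfl, FI_eq]
    rw [heq]
    apply VectorFourier.contDiff_fourierIntegral
    intro n hn
    have hn' : n < N := by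
      have h2 : n ≤ N - 1 := by exact_mod_cast hn
      omega
    simpa [Complex.norm_real, Real.norm_eq_abs] using integ_pow hf n hn'
  · intro β hβ γ hγ
    set m := ∑ j, β j with hm
    set M := N - 1 - m with hMdef
    have hmle : m ≤ N - 1 := by omega
    have hmM : m + M = N - 1 := by omega
    have hkey : ∀ ω : Ed d, ‖mderiv β (FT d f) ω‖ ≤ ‖ω‖ ^ M * Psi f (N-1) M ‖ω‖ := by
      intro ω
      rw [mderiv_eq_rem hf hN β hβ ω]
      calc ‖∫ x : Ed d, mulList (mIdxList β) x * (f x : ℂ)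
              * expRem (M+1) (-(inner ℝ x ω : ℝ))‖
          ≤ ∫ x : Ed d, ‖mulList (mIdxList β) x * (f x : ℂ)
              * expRem (M+1) (-(inner ℝ x ω : ℝ))‖ :=
            norm_integral_le_integral_norm _
        _ ≤ ∫ x : Ed d, ‖ω‖ ^ M * (|f x| * ‖x‖ ^ (N-1) *
              min (2 / (M.factorial : ℝ)) (‖x‖ * ‖ω‖ / ((M+1).factorial : ℝ))) := by
            apply integral_mono_of_nonneg
            · filter_upwards with x
              exact norm_nonneg _
            · exact (psi_integrable hf hN M ‖ω‖ (norm_nonneg ω)).const_mul _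
            · filter_upwards with x
              rw [norm_mul, norm_mul, Complex.norm_real, Real.norm_eq_abs]
              have hb := expRem_min_bound M (-(inner ℝ x ω : ℝ)) ‖x‖ ‖ω‖ (norm_nonneg x)
                (norm_nonneg ω) (by rw [abs_neg]; exact abs_real_inner_le_norm x ω)
              have hml : ‖mulList (mIdxList β) x‖ ≤ ‖x‖ ^ m := by
                have h := norm_mulList_le (mIdxList β) x
                rw [mIdxList_length β] at h
                exact h
              calc ‖mulList (mIdxList β) x‖ * |f x| * ‖expRem (M+1) (-(inner ℝ x ω : ℝ))‖
                  ≤ (‖x‖ ^ m * |f x|) * (‖x‖ ^ M * ‖ω‖ ^ M *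
                      min (2 / (M.factorial:ℝ)) (‖x‖ * ‖ω‖ / ((M+1).factorial:ℝ))) := by
                    apply mul_le_mul
                    · exact mul_le_mul_of_nonneg_right hml (abs_nonneg _)
                    · exact hb
                    · exact norm_nonneg _
                    · positivity
                _ = ‖ω‖ ^ M * (|f x| * ‖x‖ ^ (N-1) *
                      min (2 / (M.factorial:ℝ)) (‖x‖ * ‖ω‖ / ((M+1).factorial:ℝ))) := by
                    rw [← hmM, pow_add]
                    ring
        _ = ‖ω‖ ^ M * Psi f (N-1) M ‖ω‖ := by
            rw [integral_const_mul, Psi]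
    obtain ⟨n₀, hn₀⟩ : ∃ n : ℕ, Psi f (N-1) M (1/((n:ℝ)+1)) < γ :=
      ((psi_tendsto hf hN M).eventually (gt_mem_nhds hγ)).exists
    refine ⟨1/((n₀:ℝ)+1), by positivity, ?_⟩
    intro ω hω1 hω2
    have hψ : Psi f (N-1) M ‖ω‖ ≤ Psi f (N-1) M (1/((n₀:ℝ)+1)) :=
      psi_mono hf hN M (norm_nonneg ω) hω2.le
    have hfin : ‖mderiv β (FT d f) ω‖ ≤ γ * ‖ω‖ ^ M := by
      calc ‖mderiv β (FT d f) ω‖ ≤ ‖ω‖ ^ M * Psi f (N-1) M ‖ω‖ := hkey ω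
        _ ≤ ‖ω‖ ^ M * γ :=
            mul_le_mul_of_nonneg_left (le_trans hψ hn₀.le) (by positivity)
        _ = γ * ‖ω‖ ^ M := mul_comm _ _
    have hcast : ((N:ℝ) - 1 - (m:ℝ)) = ((M:ℕ):ℝ) := by
      have h1 : (M:ℝ) = ((N - 1 - m : ℕ) : ℝ) := by rw [hMdef]
      rw [h1, Nat.cast_sub hmle, Nat.cast_sub hN]
      push_cast
      ring
    rw [show ((N:ℝ) - 1 - (m:ℝ)) = ((M:ℕ):ℝ) from hcast, Real.rpow_natCast]
    exact hfin


end
end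

section
/- Let 0 < ε < 1/2 and let θ : ℝ → ℝ satisfy: θ(x) = 1 for x ∈ [−1+ε, 1−ε]; θ(x) = 0 for |x| ≥ 1+ε; and θ(x)² + θ(x−2)² = 1 for all x ∈ [0,2]. Define F : (0,∞) → ℝ by F(ω) = θ(log₂(2^{1+ε}ω/π))·cos((π/2)·log₂(2^{1+ε}ω/π)). Then for every ω > 0, only finitely many of the terms F(2^k ω)², k ∈ ℤ, are nonzero, and ∑_{k∈ℤ} F(2^k ω)² = 1. -/
open Real Filter Topology

/-- Tight-frame identity for the modified Simoncelli profile: for a Meyer-type window `θ`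
(equal to `1` on `[-1+ε, 1-ε]`, vanishing for `|x| ≥ 1+ε`, and satisfying the partition
identity `θ(x)² + θ(x-2)² = 1` on `[0,2]`), the radial profile
`F(ω) = θ(log₂(2^{1+ε} ω/π)) cos((π/2) log₂(2^{1+ε} ω/π))` satisfies, for every `ω > 0`,
that only finitely many terms `F(2^k ω)²`, `k ∈ ℤ`, are nonzero and `∑_{k∈ℤ} F(2^k ω)² = 1`. -/
theorem simoncelli_tight_frame (ε : ℝ) (hε : 0 < ε) (hε' : ε < 1/2)
    (θ : ℝ → ℝ)
    (hθ1 : ∀ x : ℝ, -1 + ε ≤ x → x ≤ 1 - ε → θ x = 1)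
    (hθ0 : ∀ x : ℝ, 1 + ε ≤ |x| → θ x = 0)
    (hθp : ∀ x : ℝ, 0 ≤ x → x ≤ 2 → θ x ^ 2 + θ (x - 2) ^ 2 = 1)
    (F : ℝ → ℝ)
    (hF : ∀ ω : ℝ, F ω =
      θ (logb 2 ((2:ℝ) ^ ((1:ℝ) + ε) * ω / π)) *
        Real.cos (π / 2 * logb 2 ((2:ℝ) ^ ((1:ℝ) + ε) * ω / π))) :
    ∀ ω : ℝ, 0 < ω →
      {k : ℤ | F ((2:ℝ) ^ k * ω) ^ 2 ≠ 0}.Finite ∧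
      ∑' k : ℤ, F ((2:ℝ) ^ k * ω) ^ 2 = 1 := by
  intro ω hω
  have hπ : (0:ℝ) < π := Real.pi_pos
  set t : ℝ := logb 2 ((2:ℝ) ^ ((1:ℝ) + ε) * ω / π) with ht
  set g : ℝ → ℝ := fun y => θ y ^ 2 * Real.cos (π / 2 * y) ^ 2 with hg
  have hFg : ∀ k : ℤ, F ((2:ℝ) ^ k * ω) ^ 2 = g (t + k) := by
    intro k
    have hA : (2:ℝ) ^ ((1:ℝ)+ε) * ((2:ℝ)^k * ω) / π
        = (2:ℝ)^k * ((2:ℝ)^((1:ℝ)+ε) * ω / π) := by ring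
    have h2k : ((2:ℝ)^k) ≠ 0 := by positivity
    have hB : ((2:ℝ)^((1:ℝ)+ε) * ω / π) ≠ 0 := by positivity
    have hlogk : logb 2 ((2:ℝ)^k) = k := by
      rw [Real.logb, Real.log_zpow]
      field_simp
    have hlog : logb 2 ((2:ℝ) ^ ((1:ℝ)+ε) * ((2:ℝ)^k * ω) / π) = t + k := by
      rw [hA, Real.logb_mul h2k hB, hlogk, ht]; ring
    rw [hF, hlog, hg]; ring
  have hg0 : ∀ y : ℝ, 1 + ε ≤ |y| → g y = 0 := by
    intro y hy; simp [hg, hθ0 y hy]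
  set n : ℤ := ⌊t⌋ with hn
  set x : ℝ := t - n with hx
  have hx0 : 0 ≤ x := by
    rw [hx]; have := Int.floor_le t; linarith
  have hx1 : x < 1 := by
    rw [hx]; have := Int.lt_floor_add_one t; linarith
  set s : Finset ℤ := {-2-n, -1-n, -n, 1-n} with hs
  have hzero : ∀ k : ℤ, k ∉ s → g (t + k) = 0 := by
    intro k hk
    simp [hs, Finset.mem_insert, Finset.mem_singleton] at hk
    have hcase : n + k ≤ -3 ∨ 2 ≤ n + k := by omega
    have htk : t + (k:ℝ) = x + ((n + k : ℤ) : ℝ) := by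
      rw [hx]; push_cast; ring
    apply hg0
    rcases hcase with h | h
    · have hc : ((n+k : ℤ) : ℝ) ≤ -3 := by exact_mod_cast h
      have : t + (k:ℝ) ≤ -2 := by rw [htk]; linarith
      refine le_abs.2 (Or.inr ?_); linarith
    · have hc : (2:ℝ) ≤ ((n+k : ℤ) : ℝ) := by exact_mod_cast h
      have : (2:ℝ) ≤ t + (k:ℝ) := by rw [htk]; linarith
      refine le_abs.2 (Or.inl ?_); linarith
  constructor
  · apply Set.Finite.subset s.finite_toSet
    intro k hk
    simp only [Set.mem_setOf_eq] at hk
    by_contra hks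
    exact hk (by rw [hFg k, hzero k hks])
  · have hsum : ∑' k : ℤ, F ((2:ℝ) ^ k * ω) ^ 2 = ∑ k ∈ s, F ((2:ℝ) ^ k * ω) ^ 2 := by
      apply tsum_eq_sum
      intro k hk
      rw [hFg k, hzero k hk]
    rw [hsum]
    have hd : ∑ k ∈ s, F ((2:ℝ) ^ k * ω) ^ 2
        = g (x - 2) + g (x - 1) + g x + g (x + 1) := by
      have e1 : t + ((-2-n : ℤ) : ℝ) = x - 2 := by rw [hx]; push_cast; ring
      have e2 : t + ((-1-n : ℤ) : ℝ) = x - 1 := by rw [hx]; push_cast; ring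
      have e3 : t + ((-n : ℤ) : ℝ) = x := by rw [hx]; push_cast; ring
      have e4 : t + ((1-n : ℤ) : ℝ) = x + 1 := by rw [hx]; push_cast; ring
      rw [hs]
      rw [Finset.sum_insert (by simp only [Finset.mem_insert, Finset.mem_singleton]; omega), Finset.sum_insert (by simp only [Finset.mem_insert, Finset.mem_singleton]; omega),
        Finset.sum_insert (by simp only [Finset.mem_insert, Finset.mem_singleton]; omega), Finset.sum_singleton]
      rw [hFg, hFg, hFg, hFg, e1, e2, e3, e4]; ring
    rw [hd]
    have h1 : θ x ^ 2 + θ (x - 2) ^ 2 = 1 := hθp x hx0 (by linarith)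
    have h2 : θ (x + 1) ^ 2 + θ (x - 1) ^ 2 = 1 := by
      have := hθp (x + 1) (by linarith) (by linarith)
      have hxx : x + 1 - 2 = x - 1 := by ring
      rwa [hxx] at this
    have hc1 : Real.cos (π / 2 * (x - 2)) = -Real.cos (π / 2 * x) := by
      rw [show π / 2 * (x - 2) = π / 2 * x - π by ring, Real.cos_sub_pi]
    have hc2 : Real.cos (π / 2 * (x - 1)) = Real.sin (π / 2 * x) := by
      rw [show π / 2 * (x - 1) = π / 2 * x - π / 2 by ring, Real.cos_sub_pi_div_two]
    have hc3 : Real.cos (π / 2 * (x + 1)) = -Real.sin (π / 2 * x) := by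
      rw [show π / 2 * (x + 1) = π / 2 * x + π / 2 by ring, Real.cos_add_pi_div_two]
    simp only [hg, hc1, hc2, hc3]
    linear_combination Real.cos (π / 2 * x) ^ 2 * h1 + Real.sin (π / 2 * x) ^ 2 * h2 +
      Real.sin_sq_add_cos_sq (π / 2 * x)
end

section
/- Let 0 < ε < 1, let g : ℝ → ℝ be a nonnegative integrable function with g(t) = 0 for |t| > 1 and ∫_{−1}^{1} g(t) dt = π/2, and define G(ω) = ∫_{−∞}^{ω} g(t) dt, H_ε(ω) = G((ω+1)/ε) − π/2 + G((ω−1)/ε), and θ_ε(ω) = cos(H_ε(ω)). Then for every ω with 0 ≤ ω ≤ 2, one has θ_ε(ω)² + θ_ε(ω−2)² = 1. -/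
open Real MeasureTheory

/-- Partition identity for the Meyer window `θ_ε = cos ∘ H_ε`, where
`G(ω) = ∫_{-∞}^{ω} g`, `H_ε(ω) = G((ω+1)/ε) - π/2 + G((ω-1)/ε)`, built from a nonnegative
bump `g` supported in `[-1,1]` with total integral `π/2`:
`θ_ε(ω)² + θ_ε(ω-2)² = 1` for `0 ≤ ω ≤ 2`. -/
theorem meyer_window_partition (ε : ℝ) (hε : 0 < ε) (hε1 : ε < 1)
    (g : ℝ → ℝ) (hg0 : ∀ t : ℝ, 0 ≤ g t) (hgi : Integrable g)
    (hsupp : ∀ t : ℝ, 1 < |t| → g t = 0)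
    (hint : ∫ t in Set.Icc (-1 : ℝ) 1, g t = π / 2)
    (G H θ : ℝ → ℝ)
    (hG : ∀ ω : ℝ, G ω = ∫ t in Set.Iic ω, g t)
    (hH : ∀ ω : ℝ, H ω = G ((ω + 1) / ε) - π / 2 + G ((ω - 1) / ε))
    (hθ : ∀ ω : ℝ, θ ω = Real.cos (H ω)) :
    ∀ ω : ℝ, 0 ≤ ω → ω ≤ 2 → θ ω ^ 2 + θ (ω - 2) ^ 2 = 1 := by
  have hGhi : ∀ y : ℝ, 1 < y → G y = π / 2 := by
    intro y hy
    rw [hG, setIntegral_eq_integral_of_forall_compl_eq_zero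
      (fun x hx => hsupp x (by
        simp only [Set.mem_Iic, not_le] at hx
        rw [abs_of_pos (lt_trans one_pos (lt_trans hy hx))]; linarith)),
      ← setIntegral_eq_integral_of_forall_compl_eq_zero
      (s := Set.Icc (-1 : ℝ) 1) (fun x hx => hsupp x (by
        simp only [Set.mem_Icc, not_and_or, not_le] at hx
        rcases hx with h | h
        · rw [abs_of_neg (by linarith)]; linarith
        · rw [abs_of_pos (by linarith)]; linarith)), hint]
  have hGlo : ∀ y : ℝ, y < -1 → G y = 0 := by
    intro y hy
    rw [hG]
    have : Set.EqOn g (fun _ => (0 : ℝ)) (Set.Iic y) := by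
      intro x hx
      simp only [Set.mem_Iic] at hx
      exact hsupp x (by rw [abs_of_neg (by linarith)]; linarith)
    rw [setIntegral_congr_fun measurableSet_Iic this]
    simp
  intro ω h0 h2
  have h1 : H ω = G ((ω - 1) / ε) := by
    rw [hH, hGhi ((ω + 1) / ε) (by rw [lt_div_iff₀ hε]; linarith)]
    ring
  have h3 : H (ω - 2) = G ((ω - 1) / ε) - π / 2 := by
    rw [hH, hGlo ((ω - 2 - 1) / ε) (by rw [div_lt_iff₀ hε]; linarith),
      show (ω - 2 + 1) / ε = (ω - 1) / ε by ring]
    ring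
  rw [hθ, hθ, h1, h3, Real.cos_sub_pi_div_two]
  exact Real.cos_sq_add_sin_sq _
end

section
/- Let d ≥ 1, N ≥ 1, fix i ∈ {1,…,d}, let R(x) = x_i/|x|^{d+1} on ℝ^d∖{0}, and for x ≠ 0 let P_N(x,y) be the Taylor polynomial of degree N−1 in y, centered at y = 0, of y ↦ R(x−y). Let f ∈ L_N(ℝ^d) with constants C > 0, 0 ≤ ε < 1, and let 0 < δ < 1−ε. Then the integral ∫_{ℝ^d} |y|^{N−ε−δ}|f(y)| dy is finite, and there exists a constant C' > 0 (depending only on d, N and δ) such that for every x ≠ 0, ∫_{{y : |y| < |x|/2}} |f(y)|·|R(x−y) − P_N(x,y)| dy ≤ C'·|x|^{−d−N+ε+δ}·∫_{ℝ^d} |y|^{N−ε−δ}|f(y)| dy. -/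
open MeasureTheory Filter Topology Real

noncomputable section

/-- The Riesz kernel `R(x) = x_i / ‖x‖^(d+1)`. -/
noncomputable def rieszKernel (d : ℕ) (i : Fin d) (x : Ed d) : ℝ := x i / ‖x‖ ^ (d + 1)

/-- `P_N(x,y)`: the Taylor polynomial of degree `N-1` in `y`, centered at `y = 0`, of the
function `y ↦ R(x - y)`. -/
noncomputable def taylorP (d N : ℕ) (i : Fin d) (x y : Ed d) : ℝ :=
  ∑ k ∈ Finset.range N,
    ((k.factorial : ℝ))⁻¹ * iteratedFDeriv ℝ k (fun z => rieszKernel d i (x - z)) 0 (fun _ => y)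

section Helpers
open Set

variable {E F : Type*} [NormedAddCommGroup E] [NormedSpace ℝ E]
  [NormedAddCommGroup F] [NormedSpace ℝ F]

lemma itFDW_eq_global {f : E → F} {u s : Set E} (hu : IsOpen u) (hf : ContDiffOn ℝ ⊤ f u)
    (hs : UniqueDiffOn ℝ s) (hsu : s ⊆ u) {x : E} (hx : x ∈ s) (m : ℕ) :
    iteratedFDerivWithin ℝ m f s x = iteratedFDeriv ℝ m f x := by
  have h1 := (hf.ftaylorSeriesWithin hu.uniqueDiffOn).mono hsu
  have h2 := h1.eq_iteratedFDerivWithin_of_uniqueDiffOn (m := m) le_top hs hx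
  rw [← h2]
  exact iteratedFDerivWithin_of_isOpen m hu (hsu hx)

lemma hasFTaylor_translate {n : WithTop ℕ∞} {f : E → F} {p : E → FormalMultilinearSeries ℝ E F}
    {s : Set E} (h : HasFTaylorSeriesUpToOn n f p s) (c : E) :
    HasFTaylorSeriesUpToOn n (fun z => f (c + z)) (fun w => p (c + w))
      ((fun z => c + z) ⁻¹' s) := by
  constructor
  · intro x hx; exact h.zero_eq _ hx
  · intro m hm x hx
    have H := h.fderivWithin m hm (c + x) hx
    have ht : HasFDerivWithinAt (fun z : E => c + z) (ContinuousLinearMap.id ℝ E)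
        ((fun z => c + z) ⁻¹' s) x := by
      simpa using ((hasFDerivAt_id x).const_add c).hasFDerivWithinAt
    have := H.comp x ht (mapsTo_preimage _ s)
    exact this
  · intro m hm
    exact (h.cont m hm).comp (continuous_const_vadd c).continuousOn (mapsTo_preimage _ s)

lemma iteratedFDeriv_comp_const_add {f : E → F} {u : Set E} (hu : IsOpen u)
    (hf : ContDiffOn ℝ ⊤ f u) (c : E) {w : E} (hw : c + w ∈ u) (m : ℕ) :
    iteratedFDeriv ℝ m (fun z => f (c + z)) w = iteratedFDeriv ℝ m f (c + w) := by
  have H := hf.ftaylorSeriesWithin hu.uniqueDiffOn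
  have H' := hasFTaylor_translate H c
  have ht : IsOpen ((fun z : E => c + z) ⁻¹' u) := hu.preimage (continuous_const.add continuous_id)
  have hw' : w ∈ (fun z : E => c + z) ⁻¹' u := hw
  have e1 : iteratedFDeriv ℝ m (fun z => f (c + z)) w
      = iteratedFDerivWithin ℝ m (fun z => f (c + z)) ((fun z : E => c + z) ⁻¹' u) w :=
    (iteratedFDerivWithin_of_isOpen m ht hw').symm
  have e2 := H'.eq_iteratedFDerivWithin_of_uniqueDiffOn (m := m) le_top ht.uniqueDiffOn hw'
  rw [e1, ← e2]
  show ftaylorSeriesWithin ℝ f u (c + w) m = _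
  show iteratedFDerivWithin ℝ m f u (c + w) = _
  exact iteratedFDerivWithin_of_isOpen m hu hw

lemma norm_iteratedFDeriv_comp_const_sub {f : E → F} {u : Set E} (hu : IsOpen u)
    (hf : ContDiffOn ℝ ⊤ f u) (x : E) {w : E} (hw : x - w ∈ u) (m : ℕ) :
    ‖iteratedFDeriv ℝ m (fun z => f (x - z)) w‖ = ‖iteratedFDeriv ℝ m f (x - w)‖ := by
  have key : (fun z => f (x + z)) ∘ (LinearIsometryEquiv.neg ℝ (E := E)) = fun z => f (x - z) := by
    funext z; simp [sub_eq_add_neg]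
  have h1 := (LinearIsometryEquiv.neg ℝ (E := E)).norm_iteratedFDeriv_comp_right
    (fun z => f (x + z)) w m
  rw [key] at h1
  rw [h1]
  have h2 : x + (LinearIsometryEquiv.neg ℝ (E := E)) w = x - w := by simp [sub_eq_add_neg]
  rw [show ((LinearIsometryEquiv.neg ℝ (E := E)) w) = -w from rfl,
    iteratedFDeriv_comp_const_add hu hf x (by simpa [sub_eq_add_neg] using hw), ← sub_eq_add_neg]

lemma contDiffOn_riesz (d : ℕ) (i : Fin d) :
    ContDiffOn ℝ ⊤ (rieszKernel d i) {x : Ed d | x ≠ 0} := by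
  intro x hx
  apply ContDiffWithinAt.div
  · exact ((EuclideanSpace.proj i : Ed d →L[ℝ] ℝ).contDiff.contDiffAt).contDiffWithinAt
  · exact (((contDiffAt_norm ℝ hx).pow (d+1)).contDiffWithinAt)
  · exact pow_ne_zero _ (norm_ne_zero_iff.2 hx)

lemma riesz_smul (d : ℕ) (i : Fin d) {c : ℝ} (hc : 0 < c) (x : Ed d) :
    rieszKernel d i (c • x) = (c ^ d)⁻¹ * rieszKernel d i x := by
  unfold rieszKernel
  have h1 : (c • x) i = c * x i := rfl
  rw [h1, norm_smul, Real.norm_eq_abs, abs_of_pos hc, mul_pow, pow_succ c d]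
  rw [show c ^ d * c * ‖x‖ ^ (d+1) = c * (c ^ d * ‖x‖ ^ (d+1)) by ring,
    mul_div_mul_left _ _ (ne_of_gt hc), div_mul_eq_div_div_swap, div_eq_inv_mul]

set_option maxHeartbeats 1000000 in
lemma riesz_deriv_bound (d N : ℕ) (i : Fin d) :
    ∃ M : ℝ, 0 < M ∧ ∀ z : Ed d, z ≠ 0 →
      ‖iteratedFDeriv ℝ N (rieszKernel d i) z‖ ≤ M * (‖z‖ ^ (d + N))⁻¹ := by
  set U : Set (Ed d) := {x : Ed d | x ≠ 0} with hUdef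
  have hU : IsOpen U := isOpen_compl_singleton
  have hR := contDiffOn_riesz d i
  -- continuity of the norm of the N-th derivative on U
  have hco : ContinuousOn (fun z => ‖iteratedFDeriv ℝ N (rieszKernel d i) z‖) U := by
    have h1 : ContinuousOn (iteratedFDerivWithin ℝ N (rieszKernel d i) U) U :=
      hR.continuousOn_iteratedFDerivWithin le_top hU.uniqueDiffOn
    exact (h1.congr (iteratedFDerivWithin_of_isOpen N hU).symm).norm
  -- sup over the unit sphere
  have hKU : Metric.sphere (0 : Ed d) 1 ⊆ U := by
    intro z hz
    simp only [mem_sphere_iff_norm, sub_zero] at hz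
    simp [hUdef, ← norm_pos_iff, hz]
  have hne : (Metric.sphere (0 : Ed d) 1).Nonempty := by
    refine ⟨EuclideanSpace.single i (1:ℝ), ?_⟩
    simp [EuclideanSpace.norm_single]
  obtain ⟨z0, hz0, hmax⟩ := (isCompact_sphere (0 : Ed d) 1).exists_isMaxOn hne (hco.mono hKU)
  rw [isMaxOn_iff] at hmax
  set M : ℝ := ‖iteratedFDeriv ℝ N (rieszKernel d i) z0‖ + 1 with hM
  refine ⟨M, by positivity, ?_⟩
  intro z hz
  have hc : 0 < ‖z‖ := norm_pos_iff.2 hz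
  set c : ℝ := ‖z‖
  set u : Ed d := c⁻¹ • z with hu
  have hcu : c • u = z := by rw [hu, smul_smul, mul_inv_cancel₀ (ne_of_gt hc), one_smul]
  have hunorm : ‖u‖ = 1 := by
    rw [hu, norm_smul, norm_inv, norm_norm]
    exact inv_mul_cancel₀ (ne_of_gt hc)
  -- the scaling map
  set L : Ed d →L[ℝ] Ed d := c • ContinuousLinearMap.id ℝ (Ed d) with hL
  have hLa : ∀ v, L v = c • v := fun v => rfl
  have hpre : L ⁻¹' U = U := by
    ext v
    simp only [Set.mem_preimage, hLa, hUdef, Set.mem_setOf_eq, smul_ne_zero_iff]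
    constructor
    · exact fun h => h.2
    · exact fun h => ⟨ne_of_gt hc, h⟩
  have huU : u ∈ U := by
    simp [hUdef, hu, smul_ne_zero_iff, inv_ne_zero (ne_of_gt hc), hz]
  have hLuU : L u ∈ U := by rw [hLa, hcu]; exact hz
  have hcomp := ContinuousLinearMap.iteratedFDerivWithin_comp_right (f := rieszKernel d i) L
    hR hU.uniqueDiffOn (by rw [hpre]; exact hU.uniqueDiffOn) hLuU (le_top : (N : WithTop ℕ∞) ≤ ⊤)
  rw [hpre] at hcomp
  -- identify the LHS with the derivative of the scaled function
  have hfun : (rieszKernel d i ∘ L) = (c ^ d)⁻¹ • rieszKernel d i := by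
    funext v
    simp only [Function.comp_apply, hLa, Pi.smul_apply, smul_eq_mul]
    exact riesz_smul d i hc v
  rw [hfun, iteratedFDerivWithin_const_smul_apply ((hR.of_le le_top) u huU) hU.uniqueDiffOn huU] at hcomp
  -- turn within into global derivatives
  have hglobz := iteratedFDerivWithin_of_isOpen (f := rieszKernel d i) (𝕜 := ℝ) N hU hLuU
  have hglobu := iteratedFDerivWithin_of_isOpen (f := rieszKernel d i) (𝕜 := ℝ) N hU huU
  rw [hglobu, hglobz, hLa, hcu] at hcomp
  -- bound the operator norm
  have hMb : ‖iteratedFDeriv ℝ N (rieszKernel d i) u‖ ≤ M := by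
    have := hmax u (by simpa [mem_sphere_iff_norm] using hunorm)
    rw [hM]; linarith
  rw [ContinuousMultilinearMap.opNorm_le_iff (by positivity)]
  intro m
  have key : iteratedFDeriv ℝ N (rieszKernel d i) z m
      = (c ^ d)⁻¹ * iteratedFDeriv ℝ N (rieszKernel d i) u (fun j => c⁻¹ • m j) := by
    have := congrArg (fun (T : ContinuousMultilinearMap ℝ (fun _ : Fin N => Ed d) ℝ)
      => T (fun j => c⁻¹ • m j)) hcomp
    simp only [ContinuousMultilinearMap.smul_apply,
      ContinuousMultilinearMap.compContinuousLinearMap_apply, hLa, smul_smul,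
      mul_inv_cancel₀ (ne_of_gt hc), one_smul, smul_eq_mul] at this
    exact (this.symm)
  rw [key]
  have hb : ‖iteratedFDeriv ℝ N (rieszKernel d i) u (fun j => c⁻¹ • m j)‖
      ≤ M * ∏ j, ‖c⁻¹ • m j‖ := by
    refine le_trans (ContinuousMultilinearMap.le_opNorm _ _) ?_
    exact mul_le_mul_of_nonneg_right hMb (Finset.prod_nonneg fun j _ => norm_nonneg _)
  have hprod : (∏ j : Fin N, ‖c⁻¹ • m j‖) = (c ^ N)⁻¹ * ∏ j, ‖m j‖ := by
    simp [norm_smul, norm_inv, Real.norm_eq_abs, abs_of_pos hc, Finset.prod_mul_distrib,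
      inv_pow]
  rw [Real.norm_eq_abs, abs_mul, abs_inv, abs_pow, abs_of_pos hc, ← Real.norm_eq_abs]
  calc (c ^ d)⁻¹ * ‖iteratedFDeriv ℝ N (rieszKernel d i) u (fun j => c⁻¹ • m j)‖
      ≤ (c ^ d)⁻¹ * (M * ((c ^ N)⁻¹ * ∏ j, ‖m j‖)) := by
        rw [← hprod]; exact mul_le_mul_of_nonneg_left hb (by positivity)
    _ = M * (c ^ (d + N))⁻¹ * ∏ j, ‖m j‖ := by rw [pow_add, mul_inv]; ring

set_option maxHeartbeats 1000000 in
lemma riesz_taylor_remainder (d n : ℕ) (i : Fin d) :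
    ∃ A : ℝ, 0 < A ∧ ∀ x y : Ed d, x ≠ 0 → ‖y‖ < ‖x‖ / 2 →
      |rieszKernel d i (x - y) - taylorP d (n+1) i x y|
        ≤ A * ‖y‖ ^ (n+1) * (‖x‖ ^ (d + (n+1)))⁻¹ := by
  obtain ⟨M, hM, hMb⟩ := riesz_deriv_bound d (n+1) i
  refine ⟨M * 2 ^ (d + (n+1)) / n.factorial, by positivity, ?_⟩
  intro x y hx hy
  have hxpos : (0:ℝ) < ‖x‖ := norm_pos_iff.2 hx
  set h : Ed d → ℝ := fun z => rieszKernel d i (x - z) with hh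
  set g : ℝ → ℝ := fun t => h (t • y) with hg
  set B : Set (Ed d) := Metric.ball (0 : Ed d) ‖x‖ with hB
  have hBopen : IsOpen B := Metric.isOpen_ball
  have hmaps : Set.MapsTo (fun z : Ed d => x - z) B {z : Ed d | z ≠ 0} := by
    intro z hz
    simp only [Set.mem_setOf_eq, sub_ne_zero]
    intro hzx
    rw [← hzx] at hz
    simp [hB, Metric.mem_ball, dist_zero_right] at hz
  have hhB : ContDiffOn ℝ ⊤ h B := by
    refine (contDiffOn_riesz d i).comp ?_ hmaps
    exact (contDiff_const.sub contDiff_id).contDiffOn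
  set L : ℝ →L[ℝ] Ed d := ContinuousLinearMap.toSpanSingleton ℝ y with hLdef
  have hLa : ∀ t : ℝ, L t = t • y := fun t => rfl
  set I : Set ℝ := L ⁻¹' B with hI
  have hIopen : IsOpen I := hBopen.preimage L.continuous
  have hIccI : Set.Icc (0:ℝ) 1 ⊆ I := by
    intro t ht
    simp only [hI, Set.mem_preimage, hLa, hB, Metric.mem_ball, dist_zero_right]
    calc ‖t • y‖ = |t| * ‖y‖ := by rw [norm_smul, Real.norm_eq_abs]
      _ ≤ 1 * ‖y‖ := by
          apply mul_le_mul_of_nonneg_right _ (norm_nonneg y)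
          rw [abs_le]; exact ⟨by linarith [ht.1], ht.2⟩
      _ < ‖x‖ := by rw [one_mul]; linarith
  have hgI : ContDiffOn ℝ ⊤ g I := by
    have : ContDiffOn ℝ ⊤ (h ∘ L) I := hhB.comp L.contDiff.contDiffOn (Set.mapsTo_preimage _ _)
    exact this
  -- chain rule
  have hchain : ∀ (k : ℕ) (t : ℝ), t ∈ I →
      iteratedDeriv k g t = iteratedFDeriv ℝ k h (t • y) (fun _ => y) := by
    intro k t ht
    have htB : L t ∈ B := ht
    have hcomp := ContinuousLinearMap.iteratedFDerivWithin_comp_right (f := h) L hhB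
      hBopen.uniqueDiffOn hIopen.uniqueDiffOn htB (le_top : (k : WithTop ℕ∞) ≤ ⊤)
    have e1 : iteratedFDerivWithin ℝ k (h ∘ L) I t = iteratedFDeriv ℝ k g t := by
      rw [show h ∘ L = g from rfl]
      exact iteratedFDerivWithin_of_isOpen k hIopen ht
    have e2 : iteratedFDerivWithin ℝ k h B (L t) = iteratedFDeriv ℝ k h (L t) :=
      iteratedFDerivWithin_of_isOpen k hBopen htB
    rw [e1, e2] at hcomp
    rw [iteratedDeriv_eq_iteratedFDeriv, hcomp]
    simp only [ContinuousMultilinearMap.compContinuousLinearMap_apply, hLa, one_smul]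
  have hIcc01 : ∀ (k : ℕ) (t : ℝ), t ∈ Set.Icc (0:ℝ) 1 →
      iteratedDerivWithin k g (Set.Icc 0 1) t = iteratedDeriv k g t := by
    intro k t ht
    rw [iteratedDerivWithin_eq_iteratedFDerivWithin, iteratedDeriv_eq_iteratedFDeriv,
      itFDW_eq_global hIopen hgI (uniqueDiffOn_Icc one_pos) hIccI ht k]
  -- bound for the (n+1)-st derivative on Icc 0 1
  have hC : ∀ t ∈ Set.Icc (0:ℝ) 1, ‖iteratedDerivWithin (n+1) g (Set.Icc 0 1) t‖
      ≤ M * ((‖x‖/2) ^ (d + (n+1)))⁻¹ * ‖y‖ ^ (n+1) := by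
    intro t ht
    rw [hIcc01 (n+1) t ht, hchain (n+1) t (hIccI ht)]
    have hw : ‖t • y‖ ≤ ‖y‖ := by
      rw [norm_smul, Real.norm_eq_abs]
      calc |t| * ‖y‖ ≤ 1 * ‖y‖ := by
            apply mul_le_mul_of_nonneg_right _ (norm_nonneg y)
            rw [abs_le]; exact ⟨by linarith [ht.1], ht.2⟩
        _ = ‖y‖ := one_mul _
    have hxw : ‖x‖ / 2 ≤ ‖x - t • y‖ := by
      have := norm_sub_norm_le x (t • y)
      calc ‖x‖/2 = ‖x‖ - ‖x‖/2 := by ring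
        _ ≤ ‖x‖ - ‖t • y‖ := by linarith [lt_of_le_of_lt hw hy]
        _ ≤ ‖x - t • y‖ := this
    have hxw0 : x - t • y ≠ 0 := by
      rw [← norm_pos_iff]; linarith
    have hnorm : ‖iteratedFDeriv ℝ (n+1) h (t • y)‖
        = ‖iteratedFDeriv ℝ (n+1) (rieszKernel d i) (x - t • y)‖ := by
      exact norm_iteratedFDeriv_comp_const_sub isOpen_compl_singleton
        (contDiffOn_riesz d i) x hxw0 (n+1)
    calc ‖iteratedFDeriv ℝ (n+1) h (t • y) (fun _ => y)‖
        ≤ ‖iteratedFDeriv ℝ (n+1) h (t • y)‖ * ∏ _j : Fin (n+1), ‖y‖ :=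
          ContinuousMultilinearMap.le_opNorm _ _
      _ = ‖iteratedFDeriv ℝ (n+1) (rieszKernel d i) (x - t • y)‖ * ‖y‖ ^ (n+1) := by
          rw [hnorm, Finset.prod_const, Finset.card_fin]
      _ ≤ (M * (‖x - t • y‖ ^ (d + (n+1)))⁻¹) * ‖y‖ ^ (n+1) := by
          apply mul_le_mul_of_nonneg_right (hMb _ hxw0) (by positivity)
      _ ≤ M * ((‖x‖/2) ^ (d + (n+1)))⁻¹ * ‖y‖ ^ (n+1) := by
          apply mul_le_mul_of_nonneg_right _ (by positivity)
          apply mul_le_mul_of_nonneg_left _ (le_of_lt hM)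
          apply inv_anti₀ (by positivity)
          exact pow_le_pow_left₀ (by positivity) hxw _
  -- Taylor's theorem
  have htaylor := taylor_mean_remainder_bound (f := g) (a := 0) (b := 1) (x := 1) (n := n)
    zero_le_one ((hgI.of_le le_top).mono hIccI) (Set.right_mem_Icc.2 zero_le_one) hC
  -- identify the pieces
  have hg1 : g 1 = rieszKernel d i (x - y) := by rw [hg]; simp [hh]
  have hpoly : taylorWithinEval g n (Set.Icc 0 1) 0 1 = taylorP d (n+1) i x y := by
    rw [taylor_within_apply, taylorP]
    apply Finset.sum_congr rfl
    intro k hk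
    rw [hIcc01 k 0 (Set.left_mem_Icc.2 zero_le_one), hchain k 0 (hIccI (Set.left_mem_Icc.2 zero_le_one))]
    rw [zero_smul]
    simp [smul_eq_mul, hh]
  rw [hg1, hpoly] at htaylor
  rw [← Real.norm_eq_abs]
  calc ‖rieszKernel d i (x - y) - taylorP d (n+1) i x y‖
      ≤ M * ((‖x‖/2) ^ (d + (n+1)))⁻¹ * ‖y‖ ^ (n+1) * (1 - 0) ^ (n+1) / n.factorial :=
        htaylor
    _ = M * 2 ^ (d + (n+1)) / n.factorial * ‖y‖ ^ (n+1) * (‖x‖ ^ (d + (n+1)))⁻¹ := by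
        rw [sub_zero, one_pow, mul_one,
          show ((‖x‖/2) ^ (d + (n+1)))⁻¹ = 2 ^ (d + (n+1)) * (‖x‖ ^ (d + (n+1)))⁻¹ by
            rw [div_pow, inv_div, div_eq_mul_inv]]
        ring

end Helpers

set_option maxHeartbeats 1000000 in
/-- Bound on the region `D₁ = {‖y‖ < ‖x‖/2}`: for `f ∈ L_N(ℝ^d)` and `0 < δ < 1 - ε`,
`∫_{D₁} |f(y)| |R(x-y) - P_N(x,y)| dy ≤ C' ‖x‖^{-d-N+ε+δ} ∫ ‖y‖^{N-ε-δ} |f(y)| dy`,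
where `C'` depends only on `d`, `N` and `δ`, and the weighted integral is finite. -/
theorem riesz_region_D1_bound (d N : ℕ) (hd : 1 ≤ d) (hN : 1 ≤ N) (i : Fin d)
    (δ : ℝ) (hδ : 0 < δ) :
    ∃ C' : ℝ, 0 < C' ∧ ∀ (f : Ed d → ℝ) (C ε : ℝ), IsLN d N f C ε → δ < 1 - ε →
      Integrable (fun y : Ed d => ‖y‖ ^ ((N : ℝ) - ε - δ) * |f y|) ∧
      ∀ x : Ed d, x ≠ 0 →
        IntegrableOn (fun y : Ed d => |f y| * |rieszKernel d i (x - y) - taylorP d N i x y|)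
          {y : Ed d | ‖y‖ < ‖x‖ / 2} ∧
        ∫ y in {y : Ed d | ‖y‖ < ‖x‖ / 2},
            |f y| * |rieszKernel d i (x - y) - taylorP d N i x y| ≤
          C' * ‖x‖ ^ (-(d:ℝ) - N + ε + δ) *
            ∫ y : Ed d, ‖y‖ ^ ((N : ℝ) - ε - δ) * |f y| := by
  obtain ⟨n, rfl⟩ : ∃ n, N = n + 1 := ⟨N - 1, (Nat.succ_pred_eq_of_pos hN).symm⟩
  obtain ⟨A, hA, hrem⟩ := riesz_taylor_remainder d n i
  refine ⟨A, hA, ?_⟩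
  intro f C ε hLN hδε
  have hε0 := hLN.eps_nonneg
  have hC0 := hLN.Cpos
  set a : ℝ := ((n+1 : ℕ) : ℝ) - ε - δ with ha_def
  have hcast : ((n+1 : ℕ) : ℝ) = (n : ℝ) + 1 := by push_cast; ring
  have ha : 0 < a := by
    rw [ha_def, hcast]
    have : (0:ℝ) ≤ n := Nat.cast_nonneg n
    linarith
  set F : Ed d → ℝ := fun y => ‖y‖ ^ a * |f y| with hF_def
  have hFnonneg : ∀ y, 0 ≤ F y := fun y =>
    mul_nonneg (Real.rpow_nonneg (norm_nonneg _) _) (abs_nonneg _)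
  have hcont_f : Continuous f := hLN.smooth.continuous
  have hFcont : Continuous F :=
    (continuous_norm.rpow_const (fun y => Or.inr ha.le)).mul hcont_f.abs
  -- integrability of F
  have hdlt : (Module.finrank ℝ (Ed d) : ℝ) < d + δ := by
    rw [finrank_euclideanSpace_fin]; linarith
  have hbound_int : Integrable (fun y : Ed d => C * (1 + ‖y‖) ^ (-((d:ℝ) + δ))) :=
    (integrable_one_add_norm hdlt).const_mul C
  have hInt : Integrable F := by
    refine hbound_int.mono' hFcont.aestronglyMeasurable (ae_of_all _ fun y => ?_)
    rw [Real.norm_eq_abs, abs_of_nonneg (hFnonneg y)]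
    have h1 : ‖y‖ ^ a ≤ (1 + ‖y‖) ^ a :=
      Real.rpow_le_rpow (norm_nonneg _) (by linarith [norm_nonneg y]) ha.le
    have h2 := hLN.decay y
    have hy1 : (0:ℝ) < 1 + ‖y‖ := by linarith [norm_nonneg y]
    have hmerge : (1 + ‖y‖) ^ a * (1 + ‖y‖) ^ (-(d:ℝ) - ((n+1 : ℕ):ℝ) + ε)
        = (1 + ‖y‖) ^ (-((d:ℝ) + δ)) := by
      rw [← Real.rpow_add hy1]
      congr 1
      rw [ha_def, hcast]; push_cast; ring
    calc F y ≤ (1 + ‖y‖) ^ a * (C * (1 + ‖y‖) ^ (-(d:ℝ) - (n+1 : ℕ) + ε)) := by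
          exact mul_le_mul h1 h2 (abs_nonneg _) (Real.rpow_nonneg hy1.le _)
      _ = (1 + ‖y‖) ^ a * (1 + ‖y‖) ^ (-(d:ℝ) - ((n+1 : ℕ):ℝ) + ε) * C := by ring
      _ = C * (1 + ‖y‖) ^ (-((d:ℝ) + δ)) := by rw [hmerge]; ring
  refine ⟨hInt, ?_⟩
  intro x hx
  have hxpos : (0:ℝ) < ‖x‖ := norm_pos_iff.2 hx
  set D1 : Set (Ed d) := {y : Ed d | ‖y‖ < ‖x‖ / 2} with hD1
  have hD1open : IsOpen D1 := by
    have : D1 = Metric.ball (0 : Ed d) (‖x‖/2) := by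
      ext y; simp [hD1, Metric.mem_ball, dist_zero_right]
    rw [this]; exact Metric.isOpen_ball
  have hD1meas : MeasurableSet D1 := hD1open.measurableSet
  set κ : ℝ := A * ‖x‖ ^ (-(d:ℝ) - (n+1 : ℕ) + ε + δ) with hκ
  have hκ0 : 0 ≤ κ := mul_nonneg hA.le (Real.rpow_nonneg hxpos.le _)
  set G : Ed d → ℝ := fun y => |f y| * |rieszKernel d i (x - y) - taylorP d (n+1) i x y|
    with hG_def
  -- pointwise bound on D1
  have hpt : ∀ y ∈ D1, G y ≤ κ * F y := by
    intro y hy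
    have hy' : ‖y‖ < ‖x‖ / 2 := hy
    have h1 : |rieszKernel d i (x - y) - taylorP d (n+1) i x y|
        ≤ A * ‖y‖ ^ (n+1) * (‖x‖ ^ (d + (n+1)))⁻¹ := hrem x y hx hy'
    have hsum : a + (ε + δ) = ((n+1 : ℕ) : ℝ) := by rw [ha_def]; ring
    have hne : a + (ε + δ) ≠ 0 := by
      rw [hsum]; exact Nat.cast_ne_zero.2 (Nat.succ_ne_zero n)
    have hsplit : (‖y‖ : ℝ) ^ (n+1) = ‖y‖ ^ a * ‖y‖ ^ (ε + δ) := by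
      rw [← Real.rpow_natCast ‖y‖ (n+1), ← hsum, Real.rpow_add' (norm_nonneg _) hne]
    have h2 : ‖y‖ ^ (ε + δ) ≤ ‖x‖ ^ (ε + δ) :=
      Real.rpow_le_rpow (norm_nonneg _) (by linarith) (by linarith)
    have h3 : ((‖x‖ : ℝ) ^ (d + (n+1)))⁻¹ = ‖x‖ ^ (-((d + (n+1) : ℕ) : ℝ)) := by
      rw [Real.rpow_neg hxpos.le, Real.rpow_natCast]
    have key : |rieszKernel d i (x - y) - taylorP d (n+1) i x y| ≤ κ * ‖y‖ ^ a := by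
      calc |rieszKernel d i (x - y) - taylorP d (n+1) i x y|
          ≤ A * ‖y‖ ^ (n+1) * (‖x‖ ^ (d + (n+1)))⁻¹ := h1
        _ = A * (‖x‖ ^ (d + (n+1)))⁻¹ * (‖y‖ ^ a * ‖y‖ ^ (ε + δ)) := by
            rw [hsplit]; ring
        _ ≤ A * (‖x‖ ^ (d + (n+1)))⁻¹ * (‖y‖ ^ a * ‖x‖ ^ (ε + δ)) := by
            apply mul_le_mul_of_nonneg_left _ (by positivity)
            exact mul_le_mul_of_nonneg_left h2 (Real.rpow_nonneg (norm_nonneg _) _)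
        _ = κ * ‖y‖ ^ a := by
            have hxmerge : ‖x‖ ^ (-((d + (n+1) : ℕ) : ℝ)) * ‖x‖ ^ (ε + δ)
                = ‖x‖ ^ (-(d:ℝ) - ((n+1 : ℕ):ℝ) + ε + δ) := by
              rw [← Real.rpow_add hxpos]
              congr 1
              push_cast; ring
            rw [h3, hκ, ← hxmerge]; ring
    calc G y ≤ |f y| * (κ * ‖y‖ ^ a) :=
          mul_le_mul_of_nonneg_left key (abs_nonneg _)
      _ = κ * F y := by rw [hF_def]; ring
  -- continuity of G on D1
  have hGcont : ContinuousOn G D1 := by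
    have hsub : ContinuousOn (fun y : Ed d => x - y) D1 :=
      (continuous_const.sub continuous_id).continuousOn
    have hmaps : Set.MapsTo (fun y : Ed d => x - y) D1 {z : Ed d | z ≠ 0} := by
      intro y hy
      have hy' : ‖y‖ < ‖x‖ / 2 := hy
      simp only [Set.mem_setOf_eq, sub_ne_zero]
      intro hxy
      rw [hxy] at hy'
      linarith [norm_nonneg y]
    have hR : ContinuousOn (fun y : Ed d => rieszKernel d i (x - y)) D1 :=
      ((contDiffOn_riesz d i).continuousOn).comp hsub hmaps
    have hT : Continuous (fun y : Ed d => taylorP d (n+1) i x y) := by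
      apply continuous_finset_sum
      intro k hk
      exact continuous_const.mul
        ((iteratedFDeriv ℝ k (fun z => rieszKernel d i (x - z)) 0).cont.comp
          (continuous_pi fun _ => continuous_id))
    exact hcont_f.abs.continuousOn.mul ((hR.sub hT.continuousOn).abs)
  have hGmeas : AEStronglyMeasurable G (volume.restrict D1) :=
    hGcont.aestronglyMeasurable hD1meas
  have hGint : IntegrableOn G D1 := by
    refine ((hInt.const_mul κ).integrableOn).mono' hGmeas ?_
    refine ae_restrict_of_forall_mem hD1meas fun y hy => ?_
    rw [Real.norm_eq_abs, abs_of_nonneg (mul_nonneg (abs_nonneg _) (abs_nonneg _))]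
    exact hpt y hy
  refine ⟨hGint, ?_⟩
  calc ∫ y in D1, G y ≤ ∫ y in D1, κ * F y :=
        setIntegral_mono_on hGint ((hInt.const_mul κ).integrableOn) hD1meas hpt
    _ = κ * ∫ y in D1, F y := by rw [MeasureTheory.integral_const_mul]
    _ ≤ κ * ∫ y, F y := by
        apply mul_le_mul_of_nonneg_left _ hκ0
        exact setIntegral_le_integral hInt (ae_of_all _ hFnonneg)
    _ = A * ‖x‖ ^ (-(d:ℝ) - (n+1 : ℕ) + ε + δ) * ∫ y, F y := by rw [hκ]


end
end
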